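/- arXiv:1710.09853 — 6 statements merged into one kernel-verified Lean document; each statement's English description precedes it below -/
import Mathlib

section
/- Let n ≥ 1 and let E₁, E₂ be complex Hilbert spaces. Let X : ℓ²(ℕⁿ, E₁) → ℓ²(ℕⁿ, E₂) be a linear isometry satisfying X ∘ Sᵢ^{E₁} = Sᵢ^{E₂} ∘ X for every i = 1, …, n, where Sᵢ^{E} denotes the i-th coordinate shift on ℓ²(ℕⁿ, E). Then the Hilbert dimension of E₁ is at most the Hilbert dimension of E₂. -/
noncomputable section

open Filter Topology MeasureTheory ContinuousLinearMap

universe u v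

/-- An operator is a *shift* if it is an isometry whose adjoint powers tend to zero strongly. -/
def IsShiftOp {H : Type*} [NormedAddCommGroup H] [InnerProductSpace ℂ H] [CompleteSpace H]
    (V : H →L[ℂ] H) : Prop :=
  (∀ f, ‖V f‖ = ‖f‖) ∧
    ∀ f, Tendsto (fun m : ℕ => ‖((ContinuousLinearMap.adjoint V) ^ m) f‖) atTop (nhds 0)

/-- The unilateral shift on `ℓ²(ℕ, W)`: `(S f) 0 = 0`, `(S f) (m+1) = f m`. -/
def IsUnilateralShift {W : Type*} [NormedAddCommGroup W] [InnerProductSpace ℂ W]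
    (S : lp (fun _ : ℕ => W) 2 →L[ℂ] lp (fun _ : ℕ => W) 2) : Prop :=
  ∀ f : lp (fun _ : ℕ => W) 2, (S f) 0 = 0 ∧ ∀ m : ℕ, (S f) (m + 1) = f m

/-- The `i`-th coordinate shift on `ℓ²(ℕⁿ, E)`. -/
def IsCoordShift {n : ℕ} {E : Type*} [NormedAddCommGroup E] [InnerProductSpace ℂ E] (i : Fin n)
    (S : lp (fun _ : Fin n → ℕ => E) 2 →L[ℂ] lp (fun _ : Fin n → ℕ => E) 2) : Prop :=
  ∀ (f : lp (fun _ : Fin n → ℕ => E) 2) (k : Fin n → ℕ),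
    (S f) k = if 1 ≤ k i then f (Function.update k i (k i - 1)) else 0

/-- The model space `ℓ²(ℕ, ℓ²(ℕⁿ, E))`, the ℓ²-model of `H²_{H²_E(𝔻ⁿ)}(𝔻)`. -/
abbrev ModelSpace (n : ℕ) (E : Type u) [NormedAddCommGroup E] [InnerProductSpace ℂ E] :=
  lp (fun _ : ℕ => lp (fun _ : Fin n → ℕ => E) 2) 2

/-- `M_{κᵢ}` acts entrywise on `ℓ²(ℕ, ℓ²(ℕⁿ, E))` by the `i`-th coordinate shift. -/
def IsKappa {n : ℕ} {E : Type*} [NormedAddCommGroup E] [InnerProductSpace ℂ E] (i : Fin n)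
    (M : ModelSpace n E →L[ℂ] ModelSpace n E) : Prop :=
  ∀ (f : ModelSpace n E) (m : ℕ) (k : Fin n → ℕ),
    ((M f) m) k = if 1 ≤ k i then (f m) (Function.update k i (k i - 1)) else 0

/-- `P` is the orthogonal projection of `H` onto `W`. -/
def IsOrthProjOnto {H : Type*} [NormedAddCommGroup H] [InnerProductSpace ℂ H]
    (W : Submodule ℂ H) (P : H →L[ℂ] H) : Prop :=
  ∀ f : H, P f ∈ W ∧ f - P f ∈ Wᗮ

/-- The Hilbert dimension of `E` is at most that of `F`. -/
def HilbertDimLE (E : Type u) (F : Type v) [NormedAddCommGroup E] [InnerProductSpace ℂ E]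
    [NormedAddCommGroup F] [InnerProductSpace ℂ F] : Prop :=
  ∀ (ι₁ : Type u) (ι₂ : Type v), HilbertBasis ι₁ ℂ E → HilbertBasis ι₂ ℂ F →
    Cardinal.lift.{v} (Cardinal.mk ι₁) ≤ Cardinal.lift.{u} (Cardinal.mk ι₂)

/-- The Hilbert dimensions of `E` and `F` agree. -/
def HilbertDimEq (E : Type u) (F : Type v) [NormedAddCommGroup E] [InnerProductSpace ℂ E]
    [NormedAddCommGroup F] [InnerProductSpace ℂ F] : Prop :=
  ∀ (ι₁ : Type u) (ι₂ : Type v), HilbertBasis ι₁ ℂ E → HilbertBasis ι₂ ℂ F →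
    Cardinal.lift.{v} (Cardinal.mk ι₁) = Cardinal.lift.{u} (Cardinal.mk ι₂)


/-! ### Auxiliary lemmas for `statement1` -/

namespace Statement1Aux

local notation "⟪" x ", " y "⟫" => @inner ℂ _ _ x y

section helpers
variable {n : ℕ} {E : Type*} [NormedAddCommGroup E] [InnerProductSpace ℂ E]

lemma single_apply' (k j : Fin n → ℕ) (a : E) :
    (lp.single 2 k a : lp (fun _ : Fin n → ℕ => E) 2) j = if j = k then a else 0 := by
  rw [lp.single_apply]; split_ifs with h <;> simp [h]

lemma coordShift_single {S : lp (fun _ : Fin n → ℕ => E) 2 →L[ℂ] lp (fun _ : Fin n → ℕ => E) 2}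
    {i : Fin n} (hS : IsCoordShift i S) (k : Fin n → ℕ) (hk : 1 ≤ k i) (a : E) :
    S (lp.single 2 (Function.update k i (k i - 1)) a) = lp.single 2 k a := by
  apply lp.ext
  funext m
  rw [hS]
  by_cases hm : m = k
  · subst hm
    rw [if_pos hk, single_apply', if_pos rfl, single_apply', if_pos rfl]
  · rw [single_apply' k m a, if_neg hm]
    split_ifs with h1
    · rw [single_apply', if_neg]
      intro hcon
      apply hm
      funext j
      by_cases hj : j = i
      · subst hj
        have := congrFun hcon j
        simp only [Function.update_self] at this
        omega
      · have := congrFun hcon j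
        simpa [Function.update_of_ne hj] using this
    · rfl

end helpers

section key
variable {n : ℕ} {E₁ : Type*} [NormedAddCommGroup E₁] [InnerProductSpace ℂ E₁]
  {E₂ : Type*} [NormedAddCommGroup E₂] [InnerProductSpace ℂ E₂]

lemma X_single_shift
    {S₁ : Fin n → (lp (fun _ : Fin n → ℕ => E₁) 2 →L[ℂ] lp (fun _ : Fin n → ℕ => E₁) 2)}
    {S₂ : Fin n → (lp (fun _ : Fin n → ℕ => E₂) 2 →L[ℂ] lp (fun _ : Fin n → ℕ => E₂) 2)}
    (hS₁ : ∀ i, IsCoordShift i (S₁ i)) (hS₂ : ∀ i, IsCoordShift i (S₂ i))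
    (X : lp (fun _ : Fin n → ℕ => E₁) 2 →ₗᵢ[ℂ] lp (fun _ : Fin n → ℕ => E₂) 2)
    (hX : ∀ (i : Fin n) f, X (S₁ i f) = S₂ i (X f)) (k m : Fin n → ℕ) (e : E₁) :
    (X (lp.single 2 k e)) (k + m) = (X (lp.single 2 0 e)) m := by
  suffices h : ∀ (N : ℕ) (k : Fin n → ℕ), (∑ i, k i) = N → ∀ (m : Fin n → ℕ) (e : E₁),
      (X (lp.single 2 k e)) (k + m) = (X (lp.single 2 0 e)) m by
    exact h _ k rfl m e
  intro N
  induction N with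
  | zero =>
    intro k hk m e
    have hk0 : k = 0 := by
      funext j
      exact Finset.sum_eq_zero_iff.mp hk j (Finset.mem_univ j)
    subst hk0
    rw [zero_add]
  | succ N ih =>
    intro k hk m e
    have hex : ∃ i, 1 ≤ k i := by
      by_contra hcon
      push_neg at hcon
      have : ∑ i, k i = 0 := Finset.sum_eq_zero fun i _ => by have := hcon i; omega
      omega
    obtain ⟨i, hi⟩ := hex
    set k' := Function.update k i (k i - 1) with hk'def
    have hsum' : ∑ j, k' j = N := by
      have h1 := Finset.sum_update_of_mem (Finset.mem_univ i) k (k i - 1)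
      have h2 := Finset.sum_update_of_mem (Finset.mem_univ i) k (k i)
      rw [Function.update_eq_self] at h2
      rw [hk'def, h1]
      omega
    have hshift : S₁ i (lp.single 2 k' e) = lp.single 2 k e := coordShift_single (hS₁ i) k hi e
    have hXk : (X (lp.single 2 k e) : lp (fun _ : Fin n → ℕ => E₂) 2)
        = S₂ i (X (lp.single 2 k' e)) := by rw [← hshift, hX]
    rw [hXk, hS₂ i]
    have hcond : 1 ≤ (k + m) i := by
      have : (k + m) i = k i + m i := rfl
      omega
    rw [if_pos hcond]
    have hupd : Function.update (k + m) i ((k + m) i - 1) = k' + m := by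
      funext j
      by_cases hj : j = i
      · subst hj
        simp only [Function.update_self, hk'def, Pi.add_apply, Function.update_self]
        omega
      · simp only [Function.update_of_ne hj, hk'def, Pi.add_apply, Function.update_of_ne hj]
    rw [hupd]
    exact ih k' hsum' m e

lemma orthonormal_X_single {ι : Type*} {v : ι → E₁} (hv : Orthonormal ℂ v)
    (X : lp (fun _ : Fin n → ℕ => E₁) 2 →ₗᵢ[ℂ] lp (fun _ : Fin n → ℕ => E₂) 2) :
    Orthonormal ℂ (fun q : (Fin n → ℕ) × ι => X (lp.single 2 q.1 (v q.2))) := by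
  classical
  rw [orthonormal_iff_ite]
  rintro ⟨k, i⟩ ⟨l, j⟩
  rw [LinearIsometry.inner_map_map, lp.inner_single_left, single_apply']
  by_cases hkl : k = l
  · subst hkl
    rw [if_pos rfl, orthonormal_iff_ite.mp hv i j]
    by_cases hij : i = j <;> simp [hij, Prod.ext_iff]
  · rw [if_neg hkl, inner_zero_right]
    simp [Prod.ext_iff, hkl]

end key

section count
variable {n : ℕ} {E₂ : Type*} [NormedAddCommGroup E₂] [InnerProductSpace ℂ E₂]

/-- Box of multi-indices with all coordinates at most `L`. -/
def mbox (n L : ℕ) : Finset (Fin n → ℕ) := Fintype.piFinset fun _ => Finset.range (L + 1)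

lemma mem_mbox {n L : ℕ} {m : Fin n → ℕ} : m ∈ mbox n L ↔ ∀ i, m i ≤ L := by
  simp [mbox, Nat.lt_succ_iff]

lemma card_mbox (n L : ℕ) : (mbox n L).card = (L + 1) ^ n := by
  simp [mbox, Fintype.card_piFinset]

lemma parseval_fin' {ι : Type*} [Fintype ι] {F : Type*} [NormedAddCommGroup F]
    [InnerProductSpace ℂ F] (b : HilbertBasis ι ℂ F) (y : F) :
    ∑ j, ‖⟪b j, y⟫‖ ^ 2 = ‖y‖ ^ 2 := by
  have h2 : ∑ j, ⟪y, b j⟫ * ⟪b j, y⟫ = ⟪y, y⟫ :=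
    (hasSum_fintype fun j => ⟪y, b j⟫ * ⟪b j, y⟫).unique (b.hasSum_inner_mul_inner y y)
  have e : ∀ j, ⟪y, b j⟫ * ⟪b j, y⟫ = ((‖⟪b j, y⟫‖ ^ 2 : ℝ) : ℂ) := by
    intro j
    rw [← inner_conj_symm y (b j), Complex.ofReal_pow]
    exact RCLike.conj_mul (K := ℂ) ⟪b j, y⟫
  rw [Finset.sum_congr rfl fun j _ => e j] at h2
  have h3 := congrArg (RCLike.re (K := ℂ)) h2
  rw [inner_self_eq_norm_sq (𝕜 := ℂ) y, map_sum] at h3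
  simpa only [RCLike.ofReal_re, RCLike.re_to_complex, Complex.ofReal_re] using h3

lemma hasSum_norm_sq_lp {ι : Type*} {G : ι → Type*} [∀ i, NormedAddCommGroup (G i)]
    [∀ i, InnerProductSpace ℂ (G i)] (g : lp G 2) :
    HasSum (fun m => ‖g m‖ ^ 2) (‖g‖ ^ 2) := by
  have h := (lp.hasSum_inner (𝕜 := ℂ) g g).mapL Complex.reCLM
  have e1 : ∀ m, Complex.reCLM ⟪g m, g m⟫ = ‖g m‖ ^ 2 := fun m =>
    inner_self_eq_norm_sq (𝕜 := ℂ) (g m)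
  have e2 : Complex.reCLM ⟪g, g⟫ = ‖g‖ ^ 2 := inner_self_eq_norm_sq (𝕜 := ℂ) g
  simp only [e1, e2] at h
  exact h

/-- The central counting argument: a `p`-fold jointly wandering orthonormal family for the
coordinate shifts on `ℓ²(ℕⁿ, E₂)` forces `p ≤ dim E₂` when `E₂` is finite-dimensional. -/
lemma counting {ι₂ : Type*} [Fintype ι₂] (b₂ : HilbertBasis ι₂ ℂ E₂) {p : ℕ}
    (w : (Fin n → ℕ) × Fin p → lp (fun _ : Fin n → ℕ => E₂) 2)
    (hw : Orthonormal ℂ w)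
    (hshift : ∀ (k m : Fin n → ℕ) (i : Fin p), (w (k, i)) (k + m) = (w (0, i)) m)
    (hnorm : ∀ i, ‖w (0, i)‖ = 1) :
    p ≤ Fintype.card ι₂ := by
  classical
  set d := Fintype.card ι₂ with hd
  set ε : ℝ := 1 / (2 * (d + 1)) with hε'
  have hε : 0 < ε := by positivity
  have hε2 : ε ≤ 1 / 2 := by
    rw [hε']
    rw [div_le_div_iff₀ (by positivity) (by norm_num)]
    nlinarith [Nat.cast_nonneg (α := ℝ) d]
  have hsum : ∀ i : Fin p, HasSum (fun m => ‖(w (0, i)) m‖ ^ 2) 1 := by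
    intro i
    have h := hasSum_norm_sq_lp (w (0, i))
    rwa [hnorm i, one_pow] at h
  obtain ⟨L, hL⟩ : ∃ L : ℕ, ∀ i : Fin p, 1 - ε ≤ ∑ m ∈ mbox n L, ‖(w (0, i)) m‖ ^ 2 := by
    have hev : ∀ᶠ s : Finset (Fin n → ℕ) in atTop,
        ∀ i : Fin p, 1 - ε ≤ ∑ m ∈ s, ‖(w (0, i)) m‖ ^ 2 := by
      rw [Filter.eventually_all]
      intro i
      exact (hsum i).eventually (eventually_ge_nhds (by linarith))
    obtain ⟨s₀, hs₀⟩ := Filter.eventually_atTop.mp hev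
    refine ⟨s₀.sup fun m => Finset.univ.sup m, fun i => hs₀ _ ?_ i⟩
    intro m hm
    rw [mem_mbox]
    intro j
    calc m j ≤ Finset.univ.sup m := Finset.le_sup (Finset.mem_univ j)
      _ ≤ s₀.sup fun m => Finset.univ.sup m := Finset.le_sup hm
  have main : ∀ N : ℕ, (p : ℝ) * (1 - ε) * (N + 1) ^ n ≤ d * (N + L + 1) ^ n := by
    intro N
    set K : Finset ((Fin n → ℕ) × Fin p) := mbox n N ×ˢ Finset.univ with hK
    set M : Finset ((Fin n → ℕ) × ι₂) := mbox n (N + L) ×ˢ Finset.univ with hM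
    set T : ℝ := ∑ q ∈ K, ∑ r ∈ M, ‖⟪w q, lp.single 2 r.1 (b₂ r.2)⟫‖ ^ 2 with hT
    have upper : T ≤ d * (N + L + 1) ^ n := by
      rw [hT, Finset.sum_comm]
      have h1 : ∀ r ∈ M, ∑ q ∈ K, ‖⟪w q, lp.single 2 r.1 (b₂ r.2)⟫‖ ^ 2 ≤ 1 := by
        intro r _
        have hb := hw.sum_inner_products_le (s := K) (lp.single 2 r.1 (b₂ r.2))
        have hns : ‖(lp.single 2 r.1 (b₂ r.2) : lp (fun _ : Fin n → ℕ => E₂) 2)‖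
            = ‖b₂ r.2‖ := lp.norm_single (E := fun _ : Fin n → ℕ => E₂) (by norm_num) r.1 (b₂ r.2)
        calc ∑ q ∈ K, ‖⟪w q, lp.single 2 r.1 (b₂ r.2)⟫‖ ^ 2 ≤ _ := hb
          _ = 1 := by rw [hns, b₂.orthonormal.1 r.2, one_pow]
      calc ∑ r ∈ M, ∑ q ∈ K, ‖⟪w q, lp.single 2 r.1 (b₂ r.2)⟫‖ ^ 2
          ≤ ∑ _r ∈ M, (1 : ℝ) := Finset.sum_le_sum h1
        _ = M.card := by simp
        _ = d * (N + L + 1) ^ n := by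
            rw [hM, Finset.card_product, card_mbox, Finset.card_univ, ← hd]
            push_cast
            ring
    have lower : (p : ℝ) * (1 - ε) * (N + 1) ^ n ≤ T := by
      rw [hT]
      have h2 : ∀ q ∈ K, (1 - ε : ℝ) ≤ ∑ r ∈ M, ‖⟪w q, lp.single 2 r.1 (b₂ r.2)⟫‖ ^ 2 := by
        rintro ⟨k, i⟩ hq
        rw [hK, Finset.mem_product, mem_mbox] at hq
        have e1 : ∑ r ∈ M, ‖⟪w (k, i), lp.single 2 r.1 (b₂ r.2)⟫‖ ^ 2
            = ∑ m ∈ mbox n (N + L), ‖(w (k, i)) m‖ ^ 2 := by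
          rw [hM, Finset.sum_product]
          refine Finset.sum_congr rfl fun m _ => ?_
          have e2 : ∀ j : ι₂, ‖⟪w (k, i), lp.single 2 m (b₂ j)⟫‖ ^ 2
              = ‖⟪b₂ j, (w (k, i)) m⟫‖ ^ 2 := by
            intro j
            rw [lp.inner_single_right, norm_inner_symm]
          rw [Finset.sum_congr rfl fun j _ => e2 j]
          exact parseval_fin' b₂ _
        rw [e1]
        have hinj : Function.Injective (fun m' : Fin n → ℕ => k + m') :=
          fun a b hab => by simpa using hab
        have himg : (mbox n L).image (fun m' => k + m') ⊆ mbox n (N + L) := by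
          intro m hm
          rw [Finset.mem_image] at hm
          obtain ⟨m', hm', rfl⟩ := hm
          rw [mem_mbox] at hm' ⊢
          intro j
          have ha : k j ≤ N := hq.1 j
          have hb : m' j ≤ L := hm' j
          have hc : (k + m') j = k j + m' j := rfl
          omega
        calc (1 - ε : ℝ) ≤ ∑ m' ∈ mbox n L, ‖(w (0, i)) m'‖ ^ 2 := hL i
          _ = ∑ m' ∈ mbox n L, ‖(w (k, i)) (k + m')‖ ^ 2 := by
              refine Finset.sum_congr rfl fun m' _ => ?_
              rw [hshift k m' i]
          _ = ∑ m ∈ (mbox n L).image (fun m' => k + m'), ‖(w (k, i)) m‖ ^ 2 := by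
              rw [Finset.sum_image fun a _ b _ hab => hinj hab]
          _ ≤ ∑ m ∈ mbox n (N + L), ‖(w (k, i)) m‖ ^ 2 :=
              Finset.sum_le_sum_of_subset_of_nonneg himg fun _ _ _ => by positivity
      calc (p : ℝ) * (1 - ε) * (N + 1) ^ n = ∑ _q ∈ K, (1 - ε : ℝ) := by
            rw [Finset.sum_const, hK, Finset.card_product, card_mbox]
            simp only [Finset.card_univ, Fintype.card_fin, nsmul_eq_mul]
            push_cast
            ring
        _ ≤ T := by rw [hT]; exact Finset.sum_le_sum h2
    linarith
  have hfinal : (p : ℝ) * (1 - ε) ≤ d := by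
    have hten : Tendsto (fun N : ℕ => ((N + L + 1 : ℝ) / (N + 1)) ^ n * d) atTop
        (nhds ((1 : ℝ) ^ n * d)) := by
      refine Tendsto.mul_const _ (Tendsto.pow ?_ n)
      have h0 : Tendsto (fun N : ℕ => (L : ℝ) / (N + 1)) atTop (nhds 0) := by
        have h2 := (tendsto_const_div_atTop_nhds_zero_nat (L : ℝ)).comp
          (tendsto_add_atTop_nat 1)
        refine h2.congr fun N => ?_
        simp only [Function.comp_apply]
        push_cast
        ring
      have h1 : Tendsto (fun N : ℕ => 1 + (L : ℝ) / (N + 1)) atTop (nhds 1) := by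
        simpa using tendsto_const_nhds.add h0
      refine Tendsto.congr (fun N => ?_) h1
      have hNp : (N : ℝ) + 1 ≠ 0 := by positivity
      field_simp
      ring
    rw [one_pow, one_mul] at hten
    refine ge_of_tendsto' hten fun N => ?_
    have hpos : (0 : ℝ) < (N + 1 : ℝ) ^ n := by positivity
    rw [div_pow, ← sub_nonneg]
    have hmain := main N
    have key : ((N + L + 1 : ℝ) ^ n / (N + 1) ^ n) * d - p * (1 - ε)
        = (d * (N + L + 1) ^ n - p * (1 - ε) * (N + 1) ^ n) / (N + 1) ^ n := by
      field_simp
    rw [key]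
    apply div_nonneg _ (le_of_lt hpos)
    linarith
  by_contra hcon
  push_neg at hcon
  have hp : (d + 1 : ℝ) ≤ p := by exact_mod_cast hcon
  have h1ε : (0 : ℝ) ≤ 1 - ε := by linarith
  have hled : ((d : ℝ) + 1) * (1 - ε) ≤ d := le_trans (by nlinarith) hfinal
  have hid : ((d : ℝ) + 1) * (1 - ε) = d + 1 / 2 := by
    rw [hε']
    field_simp
    ring
  rw [hid] at hled
  linarith

end count

end Statement1Aux

set_option maxHeartbeats 1000000 in
open Statement1Aux in
/-- If a linear isometry `X : ℓ²(ℕⁿ, E₁) → ℓ²(ℕⁿ, E₂)` intertwines all the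
coordinate shifts, then the Hilbert dimension of `E₁` is at most that of `E₂`. -/
theorem statement1 (n : ℕ) (hn : 1 ≤ n)
    (E₁ : Type u) [NormedAddCommGroup E₁] [InnerProductSpace ℂ E₁] [CompleteSpace E₁]
    (E₂ : Type v) [NormedAddCommGroup E₂] [InnerProductSpace ℂ E₂] [CompleteSpace E₂]
    (S₁ : Fin n → (lp (fun _ : Fin n → ℕ => E₁) 2 →L[ℂ] lp (fun _ : Fin n → ℕ => E₁) 2))
    (S₂ : Fin n → (lp (fun _ : Fin n → ℕ => E₂) 2 →L[ℂ] lp (fun _ : Fin n → ℕ => E₂) 2))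
    (hS₁ : ∀ i, IsCoordShift i (S₁ i)) (hS₂ : ∀ i, IsCoordShift i (S₂ i))
    (X : lp (fun _ : Fin n → ℕ => E₁) 2 →ₗᵢ[ℂ] lp (fun _ : Fin n → ℕ => E₂) 2)
    (hX : ∀ (i : Fin n) f, X (S₁ i f) = S₂ i (X f)) :
    HilbertDimLE E₁ E₂ := by
  intro ι₁ ι₂ b₁ b₂
  classical
  rcases finite_or_infinite ι₂ with hfin | hinf
  · -- `E₂` finite-dimensional
    cases nonempty_fintype ι₂
    rw [Cardinal.mk_fintype ι₂]
    set d := Fintype.card ι₂ with hd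
    by_contra hcon
    push_neg at hcon
    rw [Cardinal.lift_natCast] at hcon
    have hsucc : ((d + 1 : ℕ) : Cardinal) ≤ Cardinal.lift.{v} (Cardinal.mk ι₁) := by
      have h := Order.succ_le_of_lt hcon
      rwa [← Cardinal.nat_succ] at h
    obtain ⟨emb⟩ : Nonempty (Fin (d + 1) ↪ ι₁) := by
      rw [← Cardinal.lift_mk_le', Cardinal.mk_fin, Cardinal.lift_natCast, Cardinal.lift_uzero]
      have h2 : Cardinal.lift.{v} ((d + 1 : ℕ) : Cardinal.{u})
          ≤ Cardinal.lift.{v} (Cardinal.mk ι₁) := by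
        rwa [Cardinal.lift_natCast]
      exact Cardinal.lift_le.mp h2
    set f : Fin (d + 1) → E₁ := fun i => b₁ (emb i) with hf'
    have hforth : Orthonormal ℂ f := b₁.orthonormal.comp emb emb.injective
    set w : (Fin n → ℕ) × Fin (d + 1) → lp (fun _ : Fin n → ℕ => E₂) 2 :=
      fun q => X (lp.single 2 q.1 (f q.2)) with hw'
    have hw : Orthonormal ℂ w := orthonormal_X_single hforth X
    have hshift : ∀ (k m : Fin n → ℕ) (i : Fin (d + 1)), (w (k, i)) (k + m) = (w (0, i)) m :=
      fun k m i => X_single_shift hS₁ hS₂ X hX k m (f i)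
    have hnorm : ∀ i, ‖w (0, i)‖ = 1 := by
      intro i
      rw [hw', X.norm_map]
      rw [lp.norm_single (E := fun _ : Fin n → ℕ => E₁) (p := 2) (by norm_num) (0 : Fin n → ℕ) (f i)]
      exact hforth.1 i
    have := counting b₂ w hw hshift hnorm
    omega
  · -- `E₂` infinite-dimensional
    set u : ι₁ → lp (fun _ : Fin n → ℕ => E₂) 2 := fun α => X (lp.single 2 0 (b₁ α)) with hu'
    have hu : Orthonormal ℂ u :=
      (orthonormal_X_single b₁.orthonormal X).comp (fun α : ι₁ => ((0 : Fin n → ℕ), α))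
        (fun a b hab => congrArg Prod.snd hab)
    have hexists : ∀ α : ι₁, ∃ q : (Fin n → ℕ) × ι₂,
        (inner (𝕜 := ℂ) (lp.single 2 q.1 (b₂ q.2)) (u α)) ≠ 0 := by
      intro α
      by_contra hcon
      push_neg at hcon
      have hαz : u α = 0 := by
        apply lp.ext
        funext m
        have hz : b₂.repr ((u α) m) = 0 := by
          apply lp.ext
          funext j
          rw [HilbertBasis.repr_apply_apply]
          have h := hcon (m, j)
          rw [lp.inner_single_left] at h
          simpa using h
        have h0 := (b₂.repr.map_eq_zero_iff).mp hz
        simpa using h0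
      have hn1 : ‖u α‖ = 1 := by
        rw [hu', X.norm_map]
        rw [lp.norm_single (E := fun _ : Fin n → ℕ => E₁) (p := 2) (by norm_num) (0 : Fin n → ℕ) (b₁ α)]
        exact b₁.orthonormal.1 α
      rw [hαz, norm_zero] at hn1
      norm_num at hn1
    set A : (Fin n → ℕ) × ι₂ → Set ι₁ :=
      fun q => {α | (inner (𝕜 := ℂ) (lp.single 2 q.1 (b₂ q.2)) (u α)) ≠ 0} with hA'
    have hAcnt : ∀ q, (A q).Countable := by
      intro q
      have hsummable := hu.inner_products_summable (lp.single 2 q.1 (b₂ q.2))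
      refine Set.Countable.mono ?_ hsummable.countable_support
      intro α hα
      simp only [Function.mem_support]
      intro h0
      apply hα
      simpa [pow_eq_zero_iff, norm_eq_zero, inner_eq_zero_symm] using h0
    obtain ⟨enc, henc⟩ := exists_injective_nat ((Fin n → ℕ) × ℕ)
    choose g hg using hexists
    have hchoice : ∀ q : (Fin n → ℕ) × ι₂, ∃ h : ι₁ → ℕ,
        ∀ a b, a ∈ A q → b ∈ A q → h a = h b → a = b := by
      intro q
      obtain ⟨h, hinj⟩ := Set.countable_iff_exists_injective.mp (hAcnt q)
      refine ⟨fun α => if hα : α ∈ A q then h ⟨α, hα⟩ else 0, fun a b ha hb hab => ?_⟩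
      simp only [dif_pos ha, dif_pos hb] at hab
      exact congrArg Subtype.val (hinj hab)
    choose h hinj using hchoice
    set F : ι₁ → ι₂ × ℕ := fun α => ((g α).2, enc ((g α).1, h (g α) α)) with hF'
    have hFinj : Function.Injective F := by
      intro a b hab
      have h2 : (g a).2 = (g b).2 := congrArg Prod.fst hab
      have h3 : enc ((g a).1, h (g a) a) = enc ((g b).1, h (g b) b) := congrArg Prod.snd hab
      have h4 := henc h3
      rw [Prod.mk.injEq] at h4
      have hga : g a = g b := Prod.ext h4.1 h2
      have h6 : h (g a) a = h (g a) b := by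
        have h7 : h (g a) a = h (g b) b := h4.2
        rw [← hga] at h7
        exact h7
      exact hinj (g a) a b (hg a) (hga ▸ hg b) h6
    have hcard : Cardinal.lift.{v} (Cardinal.mk ι₁) ≤ Cardinal.lift.{u} (Cardinal.mk (ι₂ × ℕ)) :=
      Cardinal.lift_mk_le'.mpr ⟨⟨F, hFinj⟩⟩
    have hprod : Cardinal.mk (ι₂ × ℕ) = Cardinal.mk ι₂ := by
      rw [Cardinal.mk_prod, Cardinal.mk_nat, Cardinal.lift_aleph0, Cardinal.lift_uzero]
      exact Cardinal.mul_aleph0_eq (Cardinal.aleph0_le_mk ι₂)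
    rwa [hprod] at hcard
end
end

section
/- Let V be a shift on a complex Hilbert space H, let W = ker V* with orthogonal projection P_W, and define Γ : H → ℓ²(ℕ, W) by (Γ f)(m) = P_W V^{*m} f for m ∈ ℕ. Then: (i) Γ is a well-defined unitary operator satisfying Γ V = S_W Γ, where S_W is the unilateral shift on ℓ²(ℕ, W); (ii) a bounded operator C on H satisfies C V = V C if and only if the operator M = Γ C Γ* on ℓ²(ℕ, W) satisfies M S_W = S_W M; and in that case, for every η ∈ W and every m ∈ ℕ, (M(ι η))(m) = P_W V^{*m} C η, where ι η ∈ ℓ²(ℕ, W) is the sequence with η in position 0 and 0 elsewhere. -/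
noncomputable section

open Filter Topology MeasureTheory ContinuousLinearMap

universe u v

open scoped ComplexInnerProductSpace ENNReal NNReal in
private theorem statement3' {H : Type u} [NormedAddCommGroup H] [InnerProductSpace ℂ H] [CompleteSpace H]
    (V : H →L[ℂ] H)
    (hV : (∀ f, ‖V f‖ = ‖f‖) ∧
      ∀ f, Tendsto (fun m : ℕ => ‖((ContinuousLinearMap.adjoint V) ^ m) f‖) atTop (nhds 0))
    (W : Submodule ℂ H) (hW : W = LinearMap.ker (ContinuousLinearMap.adjoint V : H →ₗ[ℂ] H))
    (P : H →L[ℂ] H) (hP : ∀ f : H, P f ∈ W ∧ f - P f ∈ Wᗮ)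
    (SW : lp (fun _ : ℕ => ↥W) 2 →L[ℂ] lp (fun _ : ℕ => ↥W) 2)
    (hSW : ∀ f : lp (fun _ : ℕ => ↥W) 2, (SW f) 0 = 0 ∧ ∀ m : ℕ, (SW f) (m + 1) = f m) :
    ∃ Γ : H ≃ₗᵢ[ℂ] lp (fun _ : ℕ => ↥W) 2,
      (∀ (f : H) (m : ℕ), ((Γ f) m : H) = P (((ContinuousLinearMap.adjoint V) ^ m) f)) ∧
      (∀ f, Γ (V f) = SW (Γ f)) ∧
      ∀ C : H →L[ℂ] H,
        ((∀ f, C (V f) = V (C f)) ↔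
          ∀ g, Γ (C (Γ.symm (SW g))) = SW (Γ (C (Γ.symm g)))) ∧
        ((∀ f, C (V f) = V (C f)) →
          ∀ (η : ↥W) (m : ℕ),
            ((Γ (C (Γ.symm (lp.single 2 0 η)))) m : H) =
              P (((ContinuousLinearMap.adjoint V) ^ m) (C (η : H)))) := by
  classical
  obtain ⟨hVi, hVlim⟩ := hV
  set A := ContinuousLinearMap.adjoint V with hA
  have hAVcomp : A ∘L V = 1 := (V.norm_map_iff_adjoint_comp_self).mp hVi
  have hAV : ∀ f : H, A (V f) = f := by
    intro f
    have := congrArg (fun T : H →L[ℂ] H => T f) hAVcomp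
    simpa using this
  have hAker : ∀ η : H, η ∈ W → A η = 0 := by
    intro η hη
    rw [hW, LinearMap.mem_ker] at hη
    exact hη
  have hVperp : ∀ x : H, V x ∈ Wᗮ := by
    intro x
    rw [Submodule.mem_orthogonal]
    intro u hu
    have hV' : V x = ContinuousLinearMap.adjoint A x := by
      rw [hA, adjoint_adjoint]
    rw [hV', ContinuousLinearMap.adjoint_inner_right, hAker u hu, inner_zero_left]
  have hWdisj : ∀ x : H, x ∈ W → x ∈ Wᗮ → x = 0 := fun x h1 h2 =>
    Submodule.disjoint_def.mp (Submodule.orthogonal_disjoint W) x h1 h2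
  have hPW : ∀ η : H, η ∈ W → P η = η := by
    intro η hη
    have h1 : η - P η ∈ W := Submodule.sub_mem W hη (hP η).1
    have := hWdisj _ h1 (hP η).2
    have := sub_eq_zero.mp this
    exact this.symm
  have hPperp : ∀ x : H, x ∈ Wᗮ → P x = 0 := by
    intro x hx
    have h2 : P x ∈ Wᗮ := by
      have hx' : P x = x - (x - P x) := by abel
      rw [hx']
      exact Submodule.sub_mem _ hx (hP x).2
    exact hWdisj _ (hP x).1 h2
  have hPdecomp : ∀ g : H, g - P g = V (A g) := by
    intro g
    have hmem1 : g - P g - V (A g) ∈ Wᗮ := Submodule.sub_mem _ (hP g).2 (hVperp _)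
    have hmem2 : g - P g - V (A g) ∈ W := by
      rw [hW, LinearMap.mem_ker]
      have hPg : A (P g) = 0 := hAker _ (hP g).1
      simp [map_sub, hPg, hAV]
    exact sub_eq_zero.mp (hWdisj _ hmem2 hmem1)
  have hnormsq : ∀ g : H, ‖g‖ ^ 2 = ‖P g‖ ^ 2 + ‖A g‖ ^ 2 := by
    intro g
    have horth : ⟪P g, g - P g⟫ = 0 := by
      have h2 := (hP g).2
      rw [Submodule.mem_orthogonal] at h2
      exact h2 _ (hP g).1
    have hds := norm_add_sq_eq_norm_sq_add_norm_sq_of_inner_eq_zero (P g) (g - P g) horth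
    have hdecomp : P g + (g - P g) = g := by abel
    rw [hdecomp] at hds
    have hnv : ‖g - P g‖ = ‖A g‖ := by rw [hPdecomp g, hVi]
    rw [hnv] at hds
    calc ‖g‖ ^ 2 = ‖g‖ * ‖g‖ := sq ‖g‖ ▸ (sq ‖g‖).symm ▸ (by ring)
      _ = ‖P g‖ * ‖P g‖ + ‖A g‖ * ‖A g‖ := hds
      _ = ‖P g‖ ^ 2 + ‖A g‖ ^ 2 := by ring
  have hpartial : ∀ (f : H) (N : ℕ),
      ∑ m ∈ Finset.range N, ‖P ((A ^ m) f)‖ ^ 2 = ‖f‖ ^ 2 - ‖(A ^ N) f‖ ^ 2 := by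
    intro f N
    induction N with
    | zero => simp
    | succ n ih =>
      rw [Finset.sum_range_succ, ih]
      have h1 : (A ^ (n + 1)) f = A ((A ^ n) f) := by rw [pow_succ', ContinuousLinearMap.mul_apply]
      rw [h1]
      have := hnormsq ((A ^ n) f)
      linarith
  have hHasSum : ∀ f : H, HasSum (fun m : ℕ => ‖P ((A ^ m) f)‖ ^ 2) (‖f‖ ^ 2) := by
    intro f
    rw [hasSum_iff_tendsto_nat_of_nonneg (fun i => sq_nonneg _)]
    have he : (fun n : ℕ => ∑ m ∈ Finset.range n, ‖P ((A ^ m) f)‖ ^ 2)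
        = fun n => ‖f‖ ^ 2 - ‖(A ^ n) f‖ ^ 2 := funext (hpartial f)
    rw [he]
    have h2 : Tendsto (fun n : ℕ => ‖(A ^ n) f‖ ^ 2) atTop (𝓝 0) := by
      have := (hVlim f).pow 2
      simpa using this
    simpa using tendsto_const_nhds.sub h2
  have htoReal : (2 : ℝ≥0∞).toReal = (2 : ℝ) := by norm_num
  have hrp : ∀ x : ℝ, 0 ≤ x → x ^ (2 : ℝ≥0∞).toReal = x ^ 2 := by
    intro x hx
    rw [htoReal, show (2 : ℝ) = ((2 : ℕ) : ℝ) by norm_num, Real.rpow_natCast]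
  have hmemℓp : ∀ f : H, Memℓp (fun m : ℕ => (⟨P ((A ^ m) f), (hP _).1⟩ : ↥W)) 2 := by
    intro f
    apply memℓp_gen
    refine Summable.congr (hHasSum f).summable fun m => ?_
    rw [hrp _ (norm_nonneg _)]
    rfl
  let Γ₀ : H →ₗᵢ[ℂ] lp (fun _ : ℕ => ↥W) 2 :=
    { toFun := fun f => ⟨fun m => ⟨P ((A ^ m) f), (hP _).1⟩, hmemℓp f⟩
      map_add' := by
        intro f g
        apply lp.ext
        funext m
        simp only [lp.coeFn_add, Pi.add_apply]
        apply Subtype.ext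
        simp [map_add]
      map_smul' := by
        intro c f
        apply lp.ext
        funext m
        simp only [lp.coeFn_smul, Pi.smul_apply]
        apply Subtype.ext
        simp [_root_.map_smul]
      norm_map' := by
        intro f
        rw [lp.norm_eq_tsum_rpow (by norm_num)]
        have hts : ∑' m : ℕ,
            ‖(⟨P ((A ^ m) f), (hP _).1⟩ : ↥W)‖ ^ (2 : ℝ≥0∞).toReal = ‖f‖ ^ 2 := by
          rw [tsum_congr (fun m => hrp ‖(⟨P ((A ^ m) f), (hP _).1⟩ : ↥W)‖ (norm_nonneg _))]
          exact (hHasSum f).tsum_eq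
        show (∑' m : ℕ, ‖(⟨P ((A ^ m) f), (hP _).1⟩ : ↥W)‖ ^ (2 : ℝ≥0∞).toReal)
            ^ (1 / (2 : ℝ≥0∞).toReal) = ‖f‖
        rw [hts, htoReal, show ‖f‖ ^ 2 = ‖f‖ ^ (2:ℝ) by
          rw [show (2 : ℝ) = ((2 : ℕ) : ℝ) by norm_num, Real.rpow_natCast],
          ← Real.rpow_mul (norm_nonneg f)]
        norm_num }
  have hΓ₀coord : ∀ (f : H) (m : ℕ), ((Γ₀ f) m : H) = P ((A ^ m) f) := fun f m => rfl
  have hAVpow : ∀ (m k : ℕ), m ≤ k → ∀ x : H, (A ^ m) ((V ^ k) x) = (V ^ (k - m)) x := by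
    intro m
    induction m with
    | zero => intro k _ x; simp
    | succ n ih =>
      intro k hk x
      obtain ⟨j, rfl⟩ : ∃ j, k = j + 1 := ⟨k - 1, by omega⟩
      have he : j + 1 - (n + 1) = j - n := by omega
      rw [he, show (V ^ (j+1)) x = V ((V ^ j) x) by rw [pow_succ', ContinuousLinearMap.mul_apply],
        show (A ^ (n+1)) (V ((V ^ j) x)) = (A ^ n) (A (V ((V ^ j) x))) by rw [pow_succ, ContinuousLinearMap.mul_apply],
        hAV, ih j (by omega)]
  have hkey : ∀ (m k : ℕ) (η : H), η ∈ W →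
      P ((A ^ m) ((V ^ k) η)) = if m = k then η else 0 := by
    intro m k η hη
    rcases le_or_gt m k with h | h
    · rw [hAVpow m k h η]
      rcases eq_or_lt_of_le h with heq | hlt
      · rw [if_pos heq, heq, Nat.sub_self, pow_zero, ContinuousLinearMap.one_apply]
        exact hPW η hη
      · rw [if_neg (by omega)]
        obtain ⟨j, hj⟩ : ∃ j, k - m = j + 1 := ⟨k - m - 1, by omega⟩
        rw [hj, show (V ^ (j+1)) η = V ((V ^ j) η) by rw [pow_succ', ContinuousLinearMap.mul_apply]]
        exact hPperp _ (hVperp _)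
    · rw [if_neg (by omega), show m = (m - k) + k by omega, pow_add, ContinuousLinearMap.mul_apply,
        hAVpow k k le_rfl, Nat.sub_self, pow_zero, ContinuousLinearMap.one_apply]
      obtain ⟨j, hj⟩ : ∃ j, m - k = j + 1 := ⟨m - k - 1, by omega⟩
      rw [hj, pow_succ, ContinuousLinearMap.mul_apply, hAker η hη, map_zero, map_zero]
  have hsingle : ∀ (k : ℕ) (η : ↥W), Γ₀ ((V ^ k) (η : H)) = lp.single 2 k η := by
    intro k η
    apply lp.ext
    funext m
    rcases eq_or_ne m k with rfl | hne
    · have h1 : (lp.single 2 m η : lp (fun _ : ℕ => ↥W) 2) m = η :=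
        lp.single_apply_self _ _ _
      rw [h1]
      apply Subtype.ext
      show P ((A ^ m) ((V ^ m) (η : H))) = (η : H)
      rw [hkey m m _ η.2, if_pos rfl]
    · have h1 : (lp.single 2 k η : lp (fun _ : ℕ => ↥W) 2) m = 0 :=
        lp.single_apply_ne _ _ _ hne
      rw [h1]
      apply Subtype.ext
      show P ((A ^ m) ((V ^ k) (η : H))) = ((0 : ↥W) : H)
      rw [hkey m k _ η.2, if_neg hne]
      simp
  have hΓV₀ : ∀ f, Γ₀ (V f) = SW (Γ₀ f) := by
    intro f
    apply lp.ext
    funext m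
    cases m with
    | zero =>
      rw [show (SW (Γ₀ f) : ∀ i : ℕ, ↥W) 0 = 0 from (hSW (Γ₀ f)).1]
      apply Subtype.ext
      show P ((A ^ 0) (V f)) = ((0 : ↥W) : H)
      rw [pow_zero, ContinuousLinearMap.one_apply]
      simpa using hPperp _ (hVperp f)
    | succ n =>
      rw [show (SW (Γ₀ f) : ∀ i : ℕ, ↥W) (n + 1) = Γ₀ f n from (hSW (Γ₀ f)).2 n]
      apply Subtype.ext
      show P ((A ^ (n + 1)) (V f)) = P ((A ^ n) f)
      rw [pow_succ, ContinuousLinearMap.mul_apply, hAV]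
  have hsurj : Function.Surjective Γ₀ := by
    intro g
    have hclosed : IsClosed ((LinearMap.range Γ₀.toLinearMap :
        Submodule ℂ (lp (fun _ : ℕ => ↥W) 2)) : Set (lp (fun _ : ℕ => ↥W) 2)) := by
      have h1 : ((LinearMap.range Γ₀.toLinearMap : Submodule ℂ (lp (fun _ : ℕ => ↥W) 2)) :
          Set (lp (fun _ : ℕ => ↥W) 2)) = Set.range Γ₀ := LinearMap.coe_range _
      rw [h1]
      exact Γ₀.isometry.isClosedEmbedding.isClosed_range
    have hsum : HasSum (fun k : ℕ => lp.single 2 k (g k)) g := lp.hasSum_single (by norm_num) g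
    have hmemR : g ∈ LinearMap.range Γ₀.toLinearMap := by
      refine hclosed.mem_of_tendsto hsum.tendsto_sum_nat
        (Filter.Eventually.of_forall fun n => ?_)
      exact Submodule.sum_mem _ fun k _ => ⟨(V ^ k) ((g k : H)), hsingle k (g k)⟩
    obtain ⟨f, hf⟩ := hmemR
    exact ⟨f, hf⟩
  let Γ : H ≃ₗᵢ[ℂ] lp (fun _ : ℕ => ↥W) 2 := LinearIsometryEquiv.ofSurjective Γ₀ hsurj
  have hΓapp : ∀ f, Γ f = Γ₀ f := fun f => rfl
  have hΓV : ∀ f, Γ (V f) = SW (Γ f) := fun f => by rw [hΓapp, hΓapp]; exact hΓV₀ f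
  refine ⟨Γ, fun f m => rfl, hΓV, ?_⟩
  intro C
  have hSWΓ : ∀ f, Γ.symm (SW (Γ f)) = V f := fun f => by
    rw [← hΓV f, Γ.symm_apply_apply]
  constructor
  · constructor
    · intro hc g
      have hg : Γ.symm (SW g) = V (Γ.symm g) := by
        conv_lhs => rw [← Γ.apply_symm_apply g]
        exact hSWΓ _
      rw [hg, hc, hΓV]
    · intro hm f
      have h1 := hm (Γ f)
      rw [hSWΓ f, Γ.symm_apply_apply, ← hΓV] at h1
      exact Γ.injective h1
  · intro _ η m
    have hη : Γ.symm (lp.single 2 0 η) = (η : H) := by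
      have hs : Γ ((η : H)) = (lp.single 2 0 η : lp (fun _ : ℕ => ↥W) 2) := by
        have := hsingle 0 η
        rw [pow_zero, ContinuousLinearMap.one_apply] at this
        rw [hΓapp]
        exact this
      rw [← hs, Γ.symm_apply_apply]
    rw [hη]
    exact rfl

/-- The Wold–von Neumann decomposition `Γ : H → ℓ²(ℕ, W)`, `(Γ f)(m) = P_W V*ᵐ f`,
of a shift `V` is a well-defined unitary with `Γ V = S_W Γ`; a bounded operator `C` commutes with
`V` iff `M = Γ C Γ*` commutes with the unilateral shift `S_W`, and in that case
`(M (ι η))(m) = P_W V*ᵐ C η` for all `η ∈ W`, `m ∈ ℕ`. -/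
theorem statement3 {H : Type u} [NormedAddCommGroup H] [InnerProductSpace ℂ H] [CompleteSpace H]
    (V : H →L[ℂ] H) (hV : IsShiftOp V)
    (W : Submodule ℂ H) (hW : W = LinearMap.ker (ContinuousLinearMap.adjoint V : H →ₗ[ℂ] H))
    (P : H →L[ℂ] H) (hP : IsOrthProjOnto W P)
    (SW : lp (fun _ : ℕ => ↥W) 2 →L[ℂ] lp (fun _ : ℕ => ↥W) 2)
    (hSW : IsUnilateralShift SW) :
    ∃ Γ : H ≃ₗᵢ[ℂ] lp (fun _ : ℕ => ↥W) 2,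
      (∀ (f : H) (m : ℕ), ((Γ f) m : H) = P (((ContinuousLinearMap.adjoint V) ^ m) f)) ∧
      (∀ f, Γ (V f) = SW (Γ f)) ∧
      ∀ C : H →L[ℂ] H,
        ((∀ f, C (V f) = V (C f)) ↔
          ∀ g, Γ (C (Γ.symm (SW g))) = SW (Γ (C (Γ.symm g)))) ∧
        ((∀ f, C (V f) = V (C f)) →
          ∀ (η : ↥W) (m : ℕ),
            ((Γ (C (Γ.symm (lp.single 2 0 η)))) m : H) =
              P (((ContinuousLinearMap.adjoint V) ^ m) (C (η : H)))) := by
  exact statement3' V hV W hW P hP SW hSW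
end
end

section
/- Let (V, V₁, …, Vₙ) be an (n+1)-tuple of doubly commuting shifts on a complex Hilbert space H, and let W = ker V* = H ⊖ V H with orthogonal projection P_W. Then: (a) W is a reducing subspace for each Vᵢ, i.e., Vᵢ W ⊆ W and Vᵢ* W ⊆ W for i = 1, …, n; and (b) the unitary Γ : H → ℓ²(ℕ, W) defined by (Γ f)(m) = P_W V^{*m} f satisfies Γ V Γ* = S_W (the unilateral shift on ℓ²(ℕ, W)) and, for each i, Γ Vᵢ Γ* acts entrywise by the restriction Vᵢ|_W, i.e., (Γ Vᵢ Γ* g)(m) = Vᵢ(g(m)) for all g ∈ ℓ²(ℕ, W) and m ∈ ℕ. -/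
noncomputable section

open Filter Topology MeasureTheory ContinuousLinearMap

universe u v

local notation "⟪" x ", " y "⟫" => @inner ℂ _ _ x y

set_option maxHeartbeats 4000000 in
/-- If `(V, V₁, …, Vₙ)` is a doubly commuting tuple of shifts on `H` and
`W = ker V*`, then (a) `W` reduces every `Vᵢ`, and (b) the Wold–von Neumann unitary
`Γ : H → ℓ²(ℕ, W)`, `(Γ f)(m) = P_W V*ᵐ f`, satisfies `Γ V Γ* = S_W` and each `Γ Vᵢ Γ*` acts
entrywise by `Vᵢ|_W`. -/
theorem statement7 (n : ℕ) (hn : 1 ≤ n)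
    {H : Type u} [NormedAddCommGroup H] [InnerProductSpace ℂ H] [CompleteSpace H]
    (V : H →L[ℂ] H) (Vs : Fin n → (H →L[ℂ] H))
    (hV : IsShiftOp V) (hVs : ∀ i, IsShiftOp (Vs i))
    (hcomm : ∀ i, V ∘L Vs i = Vs i ∘L V)
    (hcomm' : ∀ i j, Vs i ∘L Vs j = Vs j ∘L Vs i)
    (hdc : ∀ i, ContinuousLinearMap.adjoint V ∘L Vs i = Vs i ∘L ContinuousLinearMap.adjoint V)
    (hdc' : ∀ i j, i ≠ j →
      ContinuousLinearMap.adjoint (Vs i) ∘L Vs j = Vs j ∘L ContinuousLinearMap.adjoint (Vs i))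
    (W : Submodule ℂ H) (hW : W = LinearMap.ker (ContinuousLinearMap.adjoint V : H →ₗ[ℂ] H))
    (P : H →L[ℂ] H) (hP : IsOrthProjOnto W P)
    (SW : lp (fun _ : ℕ => ↥W) 2 →L[ℂ] lp (fun _ : ℕ => ↥W) 2)
    (hSW : IsUnilateralShift SW) :
    (∀ i, (∀ x ∈ W, Vs i x ∈ W) ∧ ∀ x ∈ W, ContinuousLinearMap.adjoint (Vs i) x ∈ W) ∧
    ∃ Γ : H ≃ₗᵢ[ℂ] lp (fun _ : ℕ => ↥W) 2,
      (∀ (f : H) (m : ℕ), ((Γ f) m : H) = P (((ContinuousLinearMap.adjoint V) ^ m) f)) ∧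
      (∀ f, Γ (V f) = SW (Γ f)) ∧
      (∀ (i : Fin n) (g : lp (fun _ : ℕ => ↥W) 2) (m : ℕ),
        ((Γ (Vs i (Γ.symm g))) m : H) = Vs i ((g m : H))) := by
  classical
  set A : H →L[ℂ] H := ContinuousLinearMap.adjoint V with hAdef
  -- V preserves inner products
  have hVi : ∀ x y : H, ⟪V x, V y⟫ = ⟪x, y⟫ := fun x y =>
    LinearIsometry.inner_map_map ⟨V.toLinearMap, hV.1⟩ x y
  -- A ∘ V = id
  have hAV : ∀ x : H, A (V x) = x := by
    intro x
    refine ext_inner_right ℂ fun y => ?_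
    rw [hAdef, ContinuousLinearMap.adjoint_inner_left]
    exact hVi x y
  -- range V ⊆ Wᗮ
  have hVorth : ∀ u : H, V u ∈ Wᗮ := by
    intro u
    rw [Submodule.mem_orthogonal]
    intro w hw
    rw [hW, LinearMap.mem_ker, ContinuousLinearMap.coe_coe] at hw
    have h1 : ⟪A w, u⟫ = ⟪w, V u⟫ := ContinuousLinearMap.adjoint_inner_left V u w
    rw [← h1, hw, inner_zero_left]
  -- uniqueness of orthogonal projection
  have hPuniq : ∀ x q : H, q ∈ W → x - q ∈ Wᗮ → (P x : H) = q := by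
    intro x q hq hq'
    have h1 := (hP x).1
    have h2 := (hP x).2
    have hmem : P x - q ∈ W := W.sub_mem h1 hq
    have hmem' : P x - q ∈ Wᗮ := by
      have heq : P x - q = (x - q) - (x - P x) := by abel
      rw [heq]; exact Wᗮ.sub_mem hq' h2
    have h0 : ⟪P x - q, P x - q⟫ = 0 := by
      rw [Submodule.mem_orthogonal] at hmem'
      exact hmem' _ hmem
    exact sub_eq_zero.mp (inner_self_eq_zero.mp h0)
  -- P x = x - V (A x)
  have hPf : ∀ x : H, (P x : H) = x - V (A x) := by
    intro x
    refine hPuniq x _ ?_ ?_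
    · rw [hW, LinearMap.mem_ker, ContinuousLinearMap.coe_coe]
      have : A (x - V (A x)) = A x - A (V (A x)) := map_sub A x (V (A x))
      rw [this, hAV, sub_self]
    · have heq : x - (x - V (A x)) = V (A x) := by abel
      rw [heq]; exact hVorth _
  have hPVorth : ∀ x u : H, ⟪(P x : H), V u⟫ = 0 := by
    intro x u
    have h := hVorth u
    rw [Submodule.mem_orthogonal] at h
    exact h _ (hP x).1
  -- norm splitting
  have hnorm : ∀ x : H, ‖x‖ ^ 2 = ‖(P x : H)‖ ^ 2 + ‖A x‖ ^ 2 := by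
    intro x
    have hx : x = (P x : H) + V (A x) := by rw [hPf]; abel
    calc ‖x‖ ^ 2 = ‖(P x : H) + V (A x)‖ ^ 2 := by rw [← hx]
      _ = ‖(P x : H)‖ ^ 2 + ‖V (A x)‖ ^ 2 := by
          rw [pow_two, pow_two, pow_two]
          exact norm_add_sq_eq_norm_sq_add_norm_sq_of_inner_eq_zero _ _ (hPVorth x _)
      _ = ‖(P x : H)‖ ^ 2 + ‖A x‖ ^ 2 := by rw [hV.1]
  -- partial sums
  have hpow_succ : ∀ (N : ℕ) (x : H), (A ^ (N + 1)) x = A ((A ^ N) x) := by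
    intro N x
    rw [pow_succ']
    rfl
  have hpow_succ' : ∀ (N : ℕ) (x : H), (A ^ (N + 1)) x = (A ^ N) (A x) := by
    intro N x
    rw [pow_succ]
    rfl
  have hpartial : ∀ (x : H) (N : ℕ),
      ∑ m ∈ Finset.range N, ‖(P ((A ^ m) x) : H)‖ ^ 2 + ‖(A ^ N) x‖ ^ 2 = ‖x‖ ^ 2 := by
    intro x N
    induction N with
    | zero => simp
    | succ N ih =>
      rw [Finset.sum_range_succ]
      have h1 : ‖(A ^ N) x‖ ^ 2 = ‖(P ((A ^ N) x) : H)‖ ^ 2 + ‖A ((A ^ N) x)‖ ^ 2 :=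
        hnorm ((A ^ N) x)
      rw [hpow_succ N x]
      linarith
  have htail : ∀ x : H, Tendsto (fun N : ℕ => ‖(A ^ N) x‖ ^ 2) atTop (𝓝 0) := by
    intro x
    have h := hV.2 x
    rw [hAdef]
    have := h.pow 2
    simpa using this
  have hHasSum : ∀ x : H, HasSum (fun m : ℕ => ‖(P ((A ^ m) x) : H)‖ ^ 2) (‖x‖ ^ 2) := by
    intro x
    rw [hasSum_iff_tendsto_nat_of_nonneg (fun i => sq_nonneg _)]
    have heq : (fun N : ℕ => ∑ m ∈ Finset.range N, ‖(P ((A ^ m) x) : H)‖ ^ 2)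
        = fun N : ℕ => ‖x‖ ^ 2 - ‖(A ^ N) x‖ ^ 2 := funext fun N => by linarith [hpartial x N]
    rw [heq]
    simpa using tendsto_const_nhds.sub (htail x)
  -- membership in ℓ²
  have h2toReal : ((2 : ENNReal)).toReal = (2 : ℝ) := by norm_num
  have hrpow : ∀ a : ℝ, a ^ ((2 : ENNReal)).toReal = a ^ 2 := by
    intro a
    rw [h2toReal, show ((2:ℝ)) = ((2:ℕ):ℝ) by norm_num, Real.rpow_natCast]
  have hmemlp : ∀ x : H,
      Memℓp (fun m : ℕ => (⟨P ((A ^ m) x), (hP _).1⟩ : ↥W)) 2 := by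
    intro x
    apply memℓp_gen
    simp only [hrpow]
    exact (hHasSum x).summable
  -- the Wold map as a linear isometry
  let G : H →ₗᵢ[ℂ] lp (fun _ : ℕ => ↥W) 2 :=
    { toFun := fun x => ⟨fun m => (⟨P ((A ^ m) x), (hP _).1⟩ : ↥W), hmemlp x⟩
      map_add' := by
        intro x y
        apply lp.ext
        rw [lp.coeFn_add]
        funext m
        rw [Pi.add_apply]
        apply Subtype.ext
        show P ((A ^ m) (x + y)) = (((⟨P ((A ^ m) x), (hP _).1⟩ : ↥W) + ⟨P ((A ^ m) y), (hP _).1⟩ : ↥W) : H)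
        rw [Submodule.coe_add]
        show P ((A ^ m) (x + y)) = P ((A ^ m) x) + P ((A ^ m) y)
        rw [map_add, map_add]
      map_smul' := by
        intro c x
        apply lp.ext
        rw [RingHom.id_apply, lp.coeFn_smul]
        funext m
        rw [Pi.smul_apply]
        apply Subtype.ext
        show P ((A ^ m) (c • x)) = ((c • (⟨P ((A ^ m) x), (hP _).1⟩ : ↥W) : ↥W) : H)
        rw [Submodule.coe_smul]
        show P ((A ^ m) (c • x)) = c • P ((A ^ m) x)
        rw [_root_.map_smul, _root_.map_smul]
      norm_map' := by
        intro x
        show ‖(⟨fun m => (⟨P ((A ^ m) x), (hP _).1⟩ : ↥W), hmemlp x⟩ :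
            lp (fun _ : ℕ => ↥W) 2)‖ = ‖x‖
        have h := lp.norm_rpow_eq_tsum (p := 2) (by norm_num)
          (⟨fun m => (⟨P ((A ^ m) x), (hP _).1⟩ : ↥W), hmemlp x⟩ : lp (fun _ : ℕ => ↥W) 2)
        simp only [hrpow] at h
        have hts : ∑' m : ℕ, ‖(P ((A ^ m) x) : H)‖ ^ 2 = ‖x‖ ^ 2 := (hHasSum x).tsum_eq
        have h2 : ‖(⟨fun m => (⟨P ((A ^ m) x), (hP _).1⟩ : ↥W), hmemlp x⟩ :
            lp (fun _ : ℕ => ↥W) 2)‖ ^ 2 = ‖x‖ ^ 2 := by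
          rw [h, ← hts]
          rfl
        rw [← Real.sqrt_sq (norm_nonneg (⟨fun m => (⟨P ((A ^ m) x), (hP _).1⟩ : ↥W),
          hmemlp x⟩ : lp (fun _ : ℕ => ↥W) 2)), h2, Real.sqrt_sq (norm_nonneg x)] }
  have hGapply : ∀ (x : H) (m : ℕ), ((G x) m : H) = P ((A ^ m) x) := fun x m => rfl
  -- auxiliary projection facts
  have hPzero : ∀ x ∈ Wᗮ, (P x : H) = 0 := fun x hx =>
    hPuniq x 0 (zero_mem W) (by simpa using hx)
  have hPid : ∀ x ∈ W, (P x : H) = x := fun x hx => hPuniq x x hx (by simp)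
  have hAkVk : ∀ (k : ℕ) (x : H), (A ^ k) ((V ^ k) x) = x := by
    intro k
    induction k with
    | zero => intro x; simp
    | succ k ih =>
      intro x
      have hVx : (V ^ (k + 1)) x = V ((V ^ k) x) := by rw [pow_succ']; rfl
      rw [hVx, hpow_succ' k, ← hVx]
      have : A ((V ^ (k + 1)) x) = (V ^ k) x := by rw [hVx, hAV]
      rw [this, ih]
  have hAzeroW : ∀ (j : ℕ) (w : H), w ∈ W → (A ^ (j + 1)) w = 0 := by
    intro j w hw
    have hw0 : A w = 0 := by rw [hW, LinearMap.mem_ker] at hw; exact hw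
    rw [hpow_succ' j, hw0, map_zero]
  have hVj1orth : ∀ (j : ℕ) (w : H), (V ^ (j + 1)) w ∈ Wᗮ := by
    intro j w
    have : (V ^ (j + 1)) w = V ((V ^ j) w) := by rw [pow_succ']; rfl
    rw [this]
    exact hVorth _
  -- G sends V^m w (w ∈ W) to lp.single
  have hGsingle : ∀ (m : ℕ) (w : ↥W), G ((V ^ m) (w : H)) = lp.single 2 m w := by
    intro m w
    apply lp.ext
    funext k
    apply Subtype.ext
    show (P ((A ^ k) ((V ^ m) (w : H))) : H) = ((lp.single 2 m w : lp (fun _ : ℕ => ↥W) 2) k : H)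
    rcases lt_trichotomy k m with h | h | h
    · have hk : (A ^ k) ((V ^ m) (w : H)) = (V ^ (m - k)) (w : H) := by
        have hm : (V ^ m) (w : H) = (V ^ k) ((V ^ (m - k)) (w : H)) := by
          have hvm : V ^ m = V ^ k * V ^ (m - k) := by
            rw [← pow_add, Nat.add_sub_cancel' h.le]
          rw [hvm, ContinuousLinearMap.mul_apply]
        rw [hm, hAkVk]
      have hmk : m - k = (m - k - 1) + 1 := by omega
      have hs : (lp.single (E := fun _ : ℕ => ↥W) 2 m w) k = 0 :=
        lp.single_apply_ne (E := fun _ : ℕ => ↥W) 2 m w h.ne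
      rw [hk, hs, hmk, hPzero _ (hVj1orth _ _)]
      rfl
    · subst h
      have hs : (lp.single (E := fun _ : ℕ => ↥W) 2 k w) k = w :=
        lp.single_apply_self (E := fun _ : ℕ => ↥W) 2 k w
      rw [hAkVk, hs, hPid _ w.2]
    · have hk : (A ^ k) ((V ^ m) (w : H)) = (A ^ (k - m)) (w : H) := by
        have hm : (A ^ k) ((V ^ m) (w : H)) = (A ^ (k - m)) ((A ^ m) ((V ^ m) (w : H))) := by
          have ham : A ^ k = A ^ (k - m) * A ^ m := by
            rw [← pow_add, Nat.sub_add_cancel h.le]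
          rw [ham, ContinuousLinearMap.mul_apply]
        rw [hm, hAkVk]
      have hkm : k - m = (k - m - 1) + 1 := by omega
      have hs : (lp.single (E := fun _ : ℕ => ↥W) 2 m w) k = 0 :=
        lp.single_apply_ne (E := fun _ : ℕ => ↥W) 2 m w h.ne'
      rw [hk, hkm, hAzeroW _ _ w.2, hs, map_zero]
      rfl
  -- surjectivity
  have hsurj : Function.Surjective G := by
    intro g
    have hsum : HasSum (fun m : ℕ => lp.single 2 m (g m)) g :=
      lp.hasSum_single (by norm_num) g
    let R : Submodule ℂ (lp (fun _ : ℕ => ↥W) 2) := LinearMap.range G.toLinearMap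
    have hclosed : IsClosed (R : Set (lp (fun _ : ℕ => ↥W) 2)) := by
      have h1 : IsClosed (Set.range G) := G.isometry.isClosedEmbedding.isClosed_range
      have h2 : (R : Set (lp (fun _ : ℕ => ↥W) 2)) = Set.range G := by
        ext y
        simp [R, LinearMap.mem_range, Set.mem_range]
      rw [h2]; exact h1
    have hmem : g ∈ R := by
      have ht : Tendsto (fun s : Finset ℕ => ∑ m ∈ s, lp.single 2 m (g m)) atTop (𝓝 g) := hsum
      refine hclosed.mem_of_tendsto ht ?_
      filter_upwards with s
      exact Submodule.sum_mem R fun m _ => ⟨(V ^ m) ((g m : ↥W) : H), hGsingle m (g m)⟩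
    obtain ⟨x, hx⟩ := hmem
    exact ⟨x, hx⟩
  let Γ : H ≃ₗᵢ[ℂ] lp (fun _ : ℕ => ↥W) 2 := LinearIsometryEquiv.ofSurjective G hsurj
  have hΓ : ∀ x : H, Γ x = G x := fun x => congrFun (LinearIsometryEquiv.coe_ofSurjective G hsurj) x
  -- part (a)
  have hAVs : ∀ (i : Fin n) (x : H), A (Vs i x) = Vs i (A x) := by
    intro i x
    exact DFunLike.congr_fun (hdc i) x
  refine ⟨?_, ⟨Γ, ?_, ?_, ?_⟩⟩
  · intro i
    constructor
    · intro x hx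
      rw [hW, LinearMap.mem_ker] at hx ⊢
      have hx0 : A x = 0 := hx
      show A (Vs i x) = 0
      rw [hAVs, hx0, map_zero]
    · intro x hx
      rw [hW, LinearMap.mem_ker] at hx ⊢
      have hadj : ContinuousLinearMap.adjoint (Vs i) ∘L A = A ∘L ContinuousLinearMap.adjoint (Vs i) := by
        have h1 := congrArg ContinuousLinearMap.adjoint (hcomm i)
        rw [ContinuousLinearMap.adjoint_comp, ContinuousLinearMap.adjoint_comp] at h1
        rw [hAdef]
        exact h1
      have h2 : A (ContinuousLinearMap.adjoint (Vs i) x) =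
          ContinuousLinearMap.adjoint (Vs i) (A x) := DFunLike.congr_fun hadj.symm x
      have hx0 : A x = 0 := hx
      show A (ContinuousLinearMap.adjoint (Vs i) x) = 0
      rw [h2, hx0, map_zero]
  -- (Γ f) m = P (A^m f)
  · intro f m
    rw [hΓ]
    exact hGapply f m
  -- Γ V = SW Γ
  · intro f
    apply lp.ext
    funext m
    apply Subtype.ext
    rw [hΓ, hΓ]
    cases m with
    | zero =>
      rw [(hSW (G f)).1]
      show (P ((A ^ 0) (V f)) : H) = ((0 : ↥W) : H)
      simp only [pow_zero, ContinuousLinearMap.one_apply]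
      rw [hPzero _ (hVorth f)]
      rfl
    | succ m =>
      rw [(hSW (G f)).2 m]
      show (P ((A ^ (m + 1)) (V f)) : H) = (P ((A ^ m) f) : H)
      rw [hpow_succ' m, hAV]
  -- entrywise action of Vs i
  · intro i g m
    have hPcomm : ∀ x : H, (P (Vs i x) : H) = Vs i (P x) := by
      intro x
      rw [hPf, hPf, map_sub, hAVs]
      congr 1
      exact DFunLike.congr_fun (hcomm i) (A x)
    have hApowVs : ∀ (k : ℕ) (x : H), (A ^ k) (Vs i x) = Vs i ((A ^ k) x) := by
      intro k
      induction k with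
      | zero => intro x; simp
      | succ k ih =>
        intro x
        rw [hpow_succ' k, hpow_succ' k, hAVs]
        exact ih (A x)
    set f := Γ.symm g with hf
    have hgf : Γ f = g := Γ.apply_symm_apply g
    have hm : ((Γ f) m : H) = (g m : H) := by rw [hgf]
    rw [hΓ] at hm ⊢
    rw [hGapply, hApowVs, hPcomm, ← hGapply f m, hm]
end
end

section
/- Let (V, V₁, …, Vₙ) be an (n+1)-tuple of doubly commuting shifts on a complex Hilbert space H, and let D = ker V* ∩ ker V₁* ∩ ⋯ ∩ ker Vₙ* be the joint wandering subspace. Then, writing U₁ = V and U_{i+1} = Vᵢ for i = 1, …, n, the subspaces U^{𝐤} D = U₁^{k₁} ⋯ U_{n+1}^{k_{n+1}} D (𝐤 ∈ ℕ^{n+1}) are pairwise orthogonal with closed linear span H, and the map Γ : H → ℓ²(ℕ^{n+1}, D) determined by Γ(U^{𝐤} η) = e_{𝐤} ⊗ η for 𝐤 ∈ ℕ^{n+1} and η ∈ D is a well-defined unitary satisfying Γ Uⱼ = Sⱼ Γ for every j = 1, …, n+1, where S₁, …, S_{n+1} are the coordinate shifts on ℓ²(ℕ^{n+1}, D). Consequently,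 (V, V₁, …, Vₙ) is unitarily equivalent to (M_z, M_{κ₁}, …, M_{κₙ}) on ℓ²(ℕ, ℓ²(ℕⁿ, E)) for any Hilbert space E whose Hilbert dimension equals that of D. -/
noncomputable section

open Filter Topology MeasureTheory ContinuousLinearMap

universe u v

/-- The product `U^𝐤 = U₁^{k₁} ⋯ U_m^{k_m}` of powers of a tuple of operators. -/
def prodPow {H : Type*} [NormedAddCommGroup H] [InnerProductSpace ℂ H] {m : ℕ}
    (U : Fin m → (H →L[ℂ] H)) (k : Fin m → ℕ) : H →L[ℂ] H :=
  (List.ofFn fun j => (U j) ^ (k j)).prod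


set_option linter.unusedSectionVars false
set_option maxHeartbeats 1000000
set_option synthInstance.maxHeartbeats 1000000

section Statement8Aux

variable {H : Type*} [NormedAddCommGroup H] [InnerProductSpace ℂ H] [CompleteSpace H]

lemma norm_pow_apply' {A : H →L[ℂ] H} (hA : ∀ f, ‖A f‖ = ‖f‖) (i : ℕ) (x : H) :
    ‖(A ^ i) x‖ = ‖x‖ := by
  induction i with
  | zero => simp
  | succ i ih => rw [pow_succ', ContinuousLinearMap.mul_apply, hA]; exact ih

section prodPowLemmas

lemma prodPow_succ {m : ℕ} (U : Fin (m + 1) → H →L[ℂ] H) (k : Fin (m + 1) → ℕ) :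
    prodPow U k = U 0 ^ k 0 * prodPow (fun i : Fin m => U i.succ) (fun i => k i.succ) := by
  rw [prodPow, List.ofFn_succ, List.prod_cons]; rfl

lemma prodPow_zero {m : ℕ} (U : Fin m → H →L[ℂ] H) : prodPow U (fun _ => 0) = 1 := by
  induction m with
  | zero => rfl
  | succ m ih => rw [prodPow_succ, pow_zero, one_mul]; exact ih _

lemma commute_prodPow {m : ℕ} (U : Fin m → H →L[ℂ] H) (k : Fin m → ℕ) {x : H →L[ℂ] H}
    (hx : ∀ i, Commute x (U i ^ k i)) : Commute x (prodPow U k) := by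
  apply Commute.list_prod_right
  intro y hy
  obtain ⟨i, rfl⟩ := List.mem_ofFn.mp hy
  exact hx i

lemma prodPow_add {m : ℕ} (U : Fin m → H →L[ℂ] H) (hC : ∀ i j, Commute (U i) (U j))
    (k l : Fin m → ℕ) :
    prodPow U (k + l) = prodPow U k * prodPow U l := by
  induction m with
  | zero =>
    have : (k + l) = fun _ => 0 := funext fun i => i.elim0
    simp [prodPow]
  | succ m ih =>
    rw [prodPow_succ, prodPow_succ U k, prodPow_succ U l]
    have tailC : ∀ i j : Fin m, Commute (U i.succ) (U j.succ) := fun i j => hC _ _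
    have : (fun i : Fin m => (k + l) i.succ) = (fun i => k i.succ) + (fun i => l i.succ) := rfl
    rw [show (k + l) 0 = k 0 + l 0 from rfl, this, ih _ tailC, pow_add]
    have hcm : Commute (U 0 ^ l 0) (prodPow (fun i : Fin m => U i.succ) (fun i => k i.succ)) :=
      commute_prodPow _ _ fun i => ((hC 0 i.succ).pow_pow _ _)
    rw [mul_assoc, mul_assoc, ← mul_assoc (U 0 ^ l 0), hcm.eq, mul_assoc]

lemma prodPow_single {m : ℕ} (U : Fin m → H →L[ℂ] H) (j : Fin m) (a : ℕ) :
    prodPow U (Pi.single j a) = U j ^ a := by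
  induction m with
  | zero => exact j.elim0
  | succ m ih =>
    rw [prodPow_succ]
    refine Fin.cases ?_ ?_ j
    · rw [Pi.single_eq_same]
      have : (fun i : Fin m => (Pi.single (0 : Fin (m + 1)) a : Fin (m + 1) → ℕ) i.succ)
          = fun _ => 0 := by
        funext i
        simp [Pi.single_apply, Fin.succ_ne_zero i]
      rw [this, prodPow_zero, mul_one]
    · intro t
      have h0 : (Pi.single (t.succ : Fin (m + 1)) a : Fin (m + 1) → ℕ) 0 = 0 := by
        simp [Pi.single_apply, (Fin.succ_ne_zero t).symm]
      have htail : (fun i : Fin m => (Pi.single (t.succ : Fin (m + 1)) a : Fin (m + 1) → ℕ) i.succ)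
          = (Pi.single t a : Fin m → ℕ) := by
        funext i
        simp [Pi.single_apply, Fin.succ_inj]
      rw [h0, pow_zero, one_mul, htail, ih]

lemma prodPow_extract {m : ℕ} (U : Fin m → H →L[ℂ] H) (hC : ∀ i j, Commute (U i) (U j))
    (k : Fin m → ℕ) (j : Fin m) :
    prodPow U k = U j ^ k j * prodPow U (Function.update k j 0) := by
  have hk : k = Pi.single j (k j) + Function.update k j 0 := by
    funext i
    by_cases h : i = j
    · subst h; simp
    · simp [Pi.single_eq_of_ne h, Function.update_of_ne h]
  conv_lhs => rw [hk]
  rw [prodPow_add U hC, prodPow_single]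

lemma prodPow_mul_left {m : ℕ} (U : Fin m → H →L[ℂ] H) (hC : ∀ i j, Commute (U i) (U j))
    (k : Fin m → ℕ) (j : Fin m) :
    U j * prodPow U k = prodPow U (Function.update k j (k j + 1)) := by
  rw [prodPow_extract U hC k j, prodPow_extract U hC (Function.update k j (k j + 1)) j]
  rw [Function.update_self, Function.update_idem]
  rw [← mul_assoc, ← pow_succ']

lemma norm_prodPow {m : ℕ} (U : Fin m → H →L[ℂ] H) (hIso : ∀ j f, ‖U j f‖ = ‖f‖)
    (k : Fin m → ℕ) (x : H) : ‖prodPow U k x‖ = ‖x‖ := by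
  induction m with
  | zero => simp [prodPow]
  | succ m ih =>
    rw [prodPow_succ, ContinuousLinearMap.mul_apply, norm_pow_apply' (hIso 0)]
    exact ih _ (fun j f => hIso j.succ f) _
end prodPowLemmas

lemma adjoint_pow' (A : H →L[ℂ] H) (i : ℕ) : adjoint (A ^ i) = (adjoint A) ^ i := by
  induction i with
  | zero => rw [pow_zero, pow_zero, ContinuousLinearMap.one_def]; exact adjoint_id
  | succ i ih =>
    rw [pow_succ, pow_succ']
    rw [show A ^ i * A = (A ^ i) ∘L A from rfl, adjoint_comp, ih]
    rfl

lemma adjoint_prodPow {m : ℕ} (W : Fin m → H →L[ℂ] H)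
    (hCW : ∀ i j, Commute (adjoint (W i)) (adjoint (W j))) (k : Fin m → ℕ) :
    adjoint (prodPow W k) = prodPow (fun j => adjoint (W j)) k := by
  induction m with
  | zero =>
    show adjoint 1 = 1
    rw [ContinuousLinearMap.one_def]; exact adjoint_id
  | succ m ih =>
    rw [prodPow_succ, prodPow_succ (fun j => adjoint (W j))]
    rw [show W 0 ^ k 0 * prodPow (fun i : Fin m => W i.succ) (fun i => k i.succ)
        = (W 0 ^ k 0) ∘L prodPow (fun i : Fin m => W i.succ) (fun i => k i.succ) from rfl]
    rw [adjoint_comp, ih _ (fun i j => hCW i.succ j.succ), adjoint_pow']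
    exact (commute_prodPow _ _ fun i => ((hCW 0 i.succ).pow_pow _ _)).eq.symm
variable {H : Type*} [NormedAddCommGroup H] [InnerProductSpace ℂ H] [CompleteSpace H]

lemma norm_pow_applyB {A : H →L[ℂ] H} (hA : ∀ f, ‖A f‖ = ‖f‖) (i : ℕ) (x : H) :
    ‖(A ^ i) x‖ = ‖x‖ := by
  induction i with
  | zero => simp
  | succ i ih => rw [pow_succ', ContinuousLinearMap.mul_apply, hA]; exact ih

variable {m : ℕ}

/-- `Q_j = 1 - U_j U_j^*`. -/
def Qop (U : Fin m → H →L[ℂ] H) (j : Fin m) : H →L[ℂ] H :=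
  1 - U j * adjoint (U j)

def QL (U : Fin m → H →L[ℂ] H) (L : List (Fin m)) : H →L[ℂ] H :=
  (L.map fun j => Qop U j).prod

def PL (U : Fin m → H →L[ℂ] H) (L : List (Fin m)) (k : Fin m → ℕ) : H →L[ℂ] H :=
  (L.map fun j => adjoint (U j) ^ k j).prod

lemma QL_nil (U : Fin m → H →L[ℂ] H) : QL U [] = 1 := rfl
lemma PL_nil (U : Fin m → H →L[ℂ] H) (k) : PL U [] k = 1 := rfl

lemma QL_cons (U : Fin m → H →L[ℂ] H) (j : Fin m) (T : List (Fin m)) :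
    QL U (j :: T) = Qop U j * QL U T := by
  simp [QL, List.prod_cons]

lemma PL_cons (U : Fin m → H →L[ℂ] H) (j : Fin m) (T : List (Fin m)) (k) :
    PL U (j :: T) k = adjoint (U j) ^ k j * PL U T k := by
  simp [PL, List.prod_cons]

lemma PL_congr (U : Fin m → H →L[ℂ] H) (T : List (Fin m)) {k k' : Fin m → ℕ}
    (h : ∀ t ∈ T, k t = k' t) : PL U T k = PL U T k' := by
  unfold PL
  congr 1
  exact List.map_congr_left fun t ht => by rw [h t ht]

section
variable (U : Fin m → H →L[ℂ] H)
variable (hIso : ∀ j f, ‖U j f‖ = ‖f‖)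
variable (hC : ∀ i j, Commute (U i) (U j))
variable (hDC : ∀ i j, i ≠ j → Commute (adjoint (U i)) (U j))
variable (hT : ∀ j f, Tendsto (fun i : ℕ => ‖((adjoint (U j)) ^ i) f‖) atTop (nhds 0))

lemma Commute.adj_adj' {A B : H →L[ℂ] H} (h : Commute A B) :
    Commute (adjoint A) (adjoint B) := by
  have := congrArg adjoint h.eq
  rw [show A * B = A ∘L B from rfl, show B * A = B ∘L A from rfl, adjoint_comp,
    adjoint_comp] at this
  exact this.symm

include hC hDC in
lemma commute_adj_Qop {i j : Fin m} (hij : i ≠ j) :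
    Commute (adjoint (U i)) (Qop U j) :=
  (Commute.one_right _).sub_right ((hDC i j hij).mul_right ((hC j i).adj_adj'.symm))

include hC hDC in
lemma commute_U_Qop {i j : Fin m} (hij : i ≠ j) :
    Commute (U i) (Qop U j) :=
  (Commute.one_right _).sub_right ((hC i j).mul_right (hDC j i (Ne.symm hij)).symm)

include hC hDC in
lemma commute_adjpow_QL {j : Fin m} {T : List (Fin m)} (hj : j ∉ T) (i : ℕ) :
    Commute (adjoint (U j) ^ i) (QL U T) := by
  apply Commute.pow_left
  apply Commute.list_prod_right
  intro x hx
  obtain ⟨t, ht, rfl⟩ := List.mem_map.mp hx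
  exact commute_adj_Qop U hC hDC (fun h => hj (h ▸ ht))

include hIso hT in
lemma single_wold (j : Fin m) (h : H)
    (hyp : ∀ i : ℕ, Qop U j ((adjoint (U j) ^ i) h) = 0) : h = 0 := by
  have step : ∀ i : ℕ, (adjoint (U j) ^ i) h = U j ((adjoint (U j) ^ (i + 1)) h) := by
    intro i
    have h0 := hyp i
    rw [Qop, ContinuousLinearMap.sub_apply, ContinuousLinearMap.one_apply,
      ContinuousLinearMap.mul_apply, sub_eq_zero] at h0
    rw [h0, pow_succ', ContinuousLinearMap.mul_apply]
  have key : ∀ i : ℕ, h = (U j ^ i) ((adjoint (U j) ^ i) h) := by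
    intro i
    induction i with
    | zero => simp
    | succ i ih =>
      rw [pow_succ, ContinuousLinearMap.mul_apply, ← step i]
      exact ih
  have hn : ∀ i : ℕ, ‖(adjoint (U j) ^ i) h‖ = ‖h‖ := by
    intro i
    conv_rhs => rw [key i]
    rw [norm_pow_applyB (hIso j)]
  have h2 : Tendsto (fun _ : ℕ => ‖h‖) atTop (nhds 0) := by
    have := hT j h
    simpa only [hn] using this
  have := (tendsto_nhds_unique h2 tendsto_const_nhds).symm
  rwa [norm_eq_zero] at this

include hIso hC hDC hT in
lemma wold_list : ∀ (L : List (Fin m)), L.Nodup → ∀ f : H,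
    (∀ k : Fin m → ℕ, QL U L ((PL U L k) f) = 0) → f = 0 := by
  intro L
  induction L with
  | nil =>
    intro _ f hf
    simpa [QL_nil, PL_nil] using hf (fun _ => 0)
  | cons j T ih =>
    intro hnd f hf
    rw [List.nodup_cons] at hnd
    obtain ⟨hjT, hTnd⟩ := hnd
    apply ih hTnd f
    intro k
    apply single_wold U hIso hT j
    intro i
    have H1 := hf (Function.update k j i)
    rw [QL_cons, PL_cons] at H1
    rw [PL_congr U T (fun t ht => Function.update_of_ne (by rintro rfl; exact hjT ht) i k)] at H1
    rw [Function.update_self] at H1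
    rw [ContinuousLinearMap.mul_apply, ContinuousLinearMap.mul_apply] at H1
    have cm := (commute_adjpow_QL U hC hDC hjT i).eq
    have := DFunLike.congr_fun cm ((PL U T k) f)
    rw [ContinuousLinearMap.mul_apply, ContinuousLinearMap.mul_apply] at this
    rw [← this] at H1
    exact H1
end

lemma adj_mul_self {A : H →L[ℂ] H} (hA : ∀ f, ‖A f‖ = ‖f‖) :
    (adjoint A) * A = 1 := by
  ext x
  apply ext_inner_right ℂ
  intro y
  rw [ContinuousLinearMap.mul_apply, adjoint_inner_left, ContinuousLinearMap.one_apply]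
  exact LinearIsometry.inner_map_map ⟨A.toLinearMap, hA⟩ x y

section Main
variable {m : ℕ} (U : Fin m → H →L[ℂ] H)
variable (hIso : ∀ j f, ‖U j f‖ = ‖f‖)
variable (hC : ∀ i j, Commute (U i) (U j))
variable (hDC : ∀ i j, i ≠ j → Commute (adjoint (U i)) (U j))
variable (hT : ∀ j f, Tendsto (fun i : ℕ => ‖((adjoint (U j)) ^ i) f‖) atTop (nhds 0))

local notation "⟪" x ", " y "⟫" => @inner ℂ _ _ x y

lemma inner_pow_pow' {A : H →L[ℂ] H} (hA : ∀ f, ‖A f‖ = ‖f‖) (i : ℕ) (x y : H) :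
    ⟪(A ^ i) x, (A ^ i) y⟫ = ⟪x, y⟫ := by
  induction i with
  | zero => simp
  | succ i ih =>
    rw [pow_succ', ContinuousLinearMap.mul_apply, ContinuousLinearMap.mul_apply]
    exact (LinearIsometry.inner_map_map ⟨A.toLinearMap, hA⟩ _ _).trans ih

include hIso hC hDC in
lemma orth_aux (k l : Fin m → ℕ) (j : Fin m) (hj : l j < k j) (x y : H)
    (hy : adjoint (U j) y = 0) : ⟪prodPow U k x, prodPow U l y⟫ = 0 := by
  rw [prodPow_extract U hC k j, prodPow_extract U hC l j]
  set X := prodPow U (Function.update k j 0) x with hX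
  set Y := prodPow U (Function.update l j 0) y with hY
  obtain ⟨c, hc⟩ : ∃ c : ℕ, k j = l j + (c + 1) :=
    ⟨k j - l j - 1, by omega⟩
  rw [ContinuousLinearMap.mul_apply, ContinuousLinearMap.mul_apply, hc, pow_add,
    ContinuousLinearMap.mul_apply]
  rw [inner_pow_pow' (hIso j)]
  rw [← adjoint_inner_right, adjoint_pow']
  have hcomm : Commute (adjoint (U j) ^ (c + 1)) (prodPow U (Function.update l j 0)) := by
    apply Commute.pow_left
    apply commute_prodPow
    intro i
    by_cases h : i = j
    · subst h; rw [Function.update_self, pow_zero]; exact Commute.one_right _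
    · exact (hDC j i (Ne.symm h)).pow_right _
  have hYval : adjoint (U j) ^ (c + 1) • 0 = (0:H) := by simp
  have : (adjoint (U j) ^ (c + 1)) Y = prodPow U (Function.update l j 0)
      ((adjoint (U j) ^ (c + 1)) y) := by
    rw [hY, ← ContinuousLinearMap.mul_apply, hcomm.eq, ContinuousLinearMap.mul_apply]
  rw [this]
  have hzero : (adjoint (U j) ^ (c + 1)) y = 0 := by
    rw [pow_succ, ContinuousLinearMap.mul_apply, hy, map_zero]
  rw [hzero, map_zero, inner_zero_right]

include hIso hC hDC in
lemma orth_main (k l : Fin m → ℕ) (hkl : k ≠ l) (x y : H)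
    (hx : ∀ j, adjoint (U j) x = 0) (hy : ∀ j, adjoint (U j) y = 0) :
    ⟪prodPow U k x, prodPow U l y⟫ = 0 := by
  by_cases hex : ∃ j, l j < k j
  · obtain ⟨j, hj⟩ := hex
    exact orth_aux U hIso hC hDC k l j hj x y (hy j)
  · push_neg at hex
    obtain ⟨j, hj⟩ := Function.ne_iff.mp hkl
    have : k j < l j := lt_of_le_of_ne (hex j) hj
    rw [← inner_conj_symm]
    rw [orth_aux U hIso hC hDC l k j this y x (hx j)]
    simp

-- Self-adjointness and range facts for QL
include hC hDC in
lemma Qop_selfadj (j : Fin m) : adjoint (Qop U j) = Qop U j := by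
  unfold Qop
  rw [map_sub, ContinuousLinearMap.one_def, adjoint_id,
    show U j * adjoint (U j) = U j ∘L adjoint (U j) from rfl, adjoint_comp, adjoint_adjoint]

include hC hDC in
lemma commute_Qop_Qop {i j : Fin m} (hij : i ≠ j) : Commute (Qop U i) (Qop U j) :=
  (Commute.one_left _).sub_left
    ((commute_U_Qop U hC hDC hij).mul_left (commute_adj_Qop U hC hDC hij))

include hC hDC in
lemma adjoint_QL {L : List (Fin m)} (hL : L.Nodup) : adjoint (QL U L) = QL U L := by
  induction L with
  | nil =>
    rw [QL_nil, ContinuousLinearMap.one_def]; exact adjoint_id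
  | cons j T ih =>
    rw [List.nodup_cons] at hL
    rw [QL_cons, show Qop U j * QL U T = Qop U j ∘L QL U T from rfl, adjoint_comp,
      ih hL.2, Qop_selfadj U hC hDC]
    have : Commute (Qop U j) (QL U T) := by
      apply Commute.list_prod_right
      intro x hx
      obtain ⟨t, ht, rfl⟩ := List.mem_map.mp hx
      exact commute_Qop_Qop U hC hDC (by rintro rfl; exact hL.1 ht)
    exact this.eq.symm

include hIso hC hDC in
lemma adj_QL_eq_zero {L : List (Fin m)} (hL : L.Nodup) {j : Fin m} (hj : j ∈ L) :
    adjoint (U j) * QL U L = 0 := by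
  induction L with
  | nil => exact absurd hj List.not_mem_nil
  | cons t T ih =>
    rw [List.nodup_cons] at hL
    rw [QL_cons, ← mul_assoc]
    rcases List.mem_cons.mp hj with h | h
    · subst h
      have : adjoint (U j) * Qop U j = 0 := by
        unfold Qop
        rw [mul_sub, mul_one, ← mul_assoc, adj_mul_self (hIso j), one_mul, sub_self]
      rw [this, zero_mul]
    · have hjt : j ≠ t := by rintro rfl; exact hL.1 h
      rw [(commute_adj_Qop U hC hDC hjt).eq, mul_assoc, ih hL.2 h, mul_zero]

include hIso hC hDC in
lemma QL_mem_D {L : List (Fin m)} (hL : L.Nodup) {j : Fin m} (hj : j ∈ L) (x : H) :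
    adjoint (U j) (QL U L x) = 0 := by
  have := DFunLike.congr_fun (adj_QL_eq_zero U hIso hC hDC hL hj) x
  rwa [ContinuousLinearMap.mul_apply, ContinuousLinearMap.zero_apply] at this

include hIso hC hDC hT in
lemma density_main (D : Submodule ℂ H) (hD' : ∀ x, x ∈ D ↔ ∀ j, adjoint (U j) x = 0) :
    (⨆ k : Fin m → ℕ, D.map (prodPow U k : H →ₗ[ℂ] H)).topologicalClosure = ⊤ := by
  set M := (⨆ k : Fin m → ℕ, D.map (prodPow U k : H →ₗ[ℂ] H)).topologicalClosure with hM
  haveI : CompleteSpace M := (Submodule.isClosed_topologicalClosure _).completeSpace_coe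
  rw [← Submodule.orthogonal_eq_bot_iff]
  rw [eq_bot_iff]
  intro f hf
  rw [Submodule.mem_bot]
  apply wold_list U hIso hC hDC hT (List.finRange m) (List.nodup_finRange m) f
  intro k
  rw [← inner_self_eq_zero (𝕜 := ℂ)]
  set u := (PL U (List.finRange m) k) f with hu
  have step1 := (adjoint_inner_right (QL U (List.finRange m)) u (QL U (List.finRange m) u)).symm
  rw [adjoint_QL U hC hDC (List.nodup_finRange m)] at step1
  rw [step1]
  set d := QL U (List.finRange m) (QL U (List.finRange m) u) with hd
  have hdD : d ∈ D := by
    rw [hD']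
    intro j
    exact QL_mem_D U hIso hC hDC (List.nodup_finRange m) (List.mem_finRange j) _
  -- u = adjoint (prodPow U k) f
  have hPL : PL U (List.finRange m) k = adjoint (prodPow U k) := by
    have h1 : PL U (List.finRange m) k = prodPow (fun j => adjoint (U j)) k := by
      rw [PL, prodPow, List.ofFn_eq_map]
    have h2 : adjoint (prodPow U k) = prodPow (fun j => adjoint (U j)) k :=
      adjoint_prodPow U (fun i j => ((hC j i).adj_adj').symm) k
    rw [h1, ← h2]
  rw [hu, hPL, adjoint_inner_left]
  have hmem : prodPow U k d ∈ M := by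
    apply Submodule.le_topologicalClosure
    exact Submodule.mem_iSup_of_mem k (Submodule.mem_map_of_mem hdD)
  rw [Submodule.mem_orthogonal] at hf
  rw [← inner_conj_symm, hf _ hmem, map_zero]
end Main


end Statement8Aux

section S8LP
section LPlemmas
variable {ι : Type*} [DecidableEq ι] {W : Type*} [NormedAddCommGroup W] [InnerProductSpace ℂ W]

lemma lp_single_apply_const (i j : ι) (a : W) :
    (lp.single 2 i a : lp (fun _ : ι => W) 2) j = if j = i then a else 0 := by
  rw [lp.single_apply]
  split_ifs with h
  · subst h; simp
  · simp [h]

lemma lp_single_add (i : ι) (a b : W) :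
    (lp.single 2 i (a + b) : lp (fun _ : ι => W) 2) = lp.single 2 i a + lp.single 2 i b := by
  apply lp.ext
  funext j
  rw [lp.coeFn_add, Pi.add_apply, lp_single_apply_const, lp_single_apply_const,
    lp_single_apply_const]
  by_cases h : j = i
  · simp [h]
  · simp [h]

/-- `lp.single` as a linear isometry. -/
def singleLI (i : ι) : W →ₗᵢ[ℂ] lp (fun _ : ι => W) 2 where
  toLinearMap :=
    { toFun := fun a => lp.single 2 i a
      map_add' := lp_single_add i
      map_smul' := fun c a => by simpa using lp.single_smul (E := fun _ : ι => W) 2 i c a }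
  norm_map' := fun a => lp.norm_single (E := fun _ : ι => W) (p := 2) (by norm_num) i a

@[simp] lemma singleLI_apply (i : ι) (a : W) : singleLI i a = lp.single 2 i a := by rfl

lemma inner_single_single (i j : ι) (a b : W) :
    (inner ℂ (lp.single 2 i a : lp (fun _ : ι => W) 2) (lp.single 2 j b) : ℂ)
      = if i = j then (inner ℂ a b : ℂ) else 0 := by
  rw [lp.inner_single_left, lp_single_apply_const]
  by_cases h : i = j
  · simp [h]
  · simp [h]

lemma mem_closedSubmodule_of_single {N : Submodule ℂ (lp (fun _ : ι => W) 2)}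
    (hN : IsClosed (N : Set (lp (fun _ : ι => W) 2)))
    (h : ∀ (i : ι) (a : W), lp.single 2 i a ∈ N) (f : lp (fun _ : ι => W) 2) : f ∈ N := by
  have hs := lp.hasSum_single (E := fun _ : ι => W) (p := 2) ENNReal.ofNat_ne_top f
  exact hN.mem_of_tendsto hs
    (Filter.Eventually.of_forall fun s => Submodule.sum_mem N fun i _ => h i (f i))

end LPlemmas

section shiftLemmas
variable {N : ℕ} {W : Type*} [NormedAddCommGroup W] [InnerProductSpace ℂ W]

lemma shift_single_pointwise (i : Fin N) (t l : Fin N → ℕ) (e : W) :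
    (if 1 ≤ l i then
      (lp.single 2 t e : lp (fun _ : Fin N → ℕ => W) 2) (Function.update l i (l i - 1)) else 0)
      = (lp.single 2 (Function.update t i (t i + 1)) e : lp (fun _ : Fin N → ℕ => W) 2) l := by
  by_cases h1 : 1 ≤ l i
  · rw [if_pos h1, lp_single_apply_const, lp_single_apply_const]
    by_cases h2 : Function.update l i (l i - 1) = t
    · rw [if_pos h2, if_pos]
      rw [← h2, Function.update_idem, Function.update_self]
      rw [show l i - 1 + 1 = l i from by omega, Function.update_eq_self]
    · rw [if_neg h2, if_neg]
      intro hl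
      apply h2
      rw [hl, Function.update_self, Function.update_idem]
      rw [show t i + 1 - 1 = t i from by omega, Function.update_eq_self]
  · rw [if_neg h1, lp_single_apply_const, if_neg]
    intro hl
    apply h1
    rw [hl, Function.update_self]
    omega

lemma coordShift_single {i : Fin N}
    {S : lp (fun _ : Fin N → ℕ => W) 2 →L[ℂ] lp (fun _ : Fin N → ℕ => W) 2}
    (hS : IsCoordShift i S) (t : Fin N → ℕ) (e : W) :
    S (lp.single 2 t e) = lp.single 2 (Function.update t i (t i + 1)) e := by
  apply lp.ext
  funext l
  rw [hS _ l, shift_single_pointwise]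

lemma unilateralShift_single {S : lp (fun _ : ℕ => W) 2 →L[ℂ] lp (fun _ : ℕ => W) 2}
    (hS : IsUnilateralShift S) (m : ℕ) (g : W) :
    S (lp.single 2 m g) = lp.single 2 (m + 1) g := by
  apply lp.ext
  funext j
  cases j with
  | zero =>
    rw [(hS _).1, lp_single_apply_const, if_neg (by omega)]
  | succ j =>
    rw [(hS _).2 j, lp_single_apply_const, lp_single_apply_const]
    by_cases h : j = m
    · rw [if_pos h, if_pos (by omega)]
    · rw [if_neg h, if_neg (by omega)]

lemma kappa_single {n : ℕ} {E : Type*} [NormedAddCommGroup E] [InnerProductSpace ℂ E]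
    {i : Fin n} {M : ModelSpace n E →L[ℂ] ModelSpace n E} (hM : IsKappa i M)
    (m : ℕ) (t : Fin n → ℕ) (e : E) :
    M (lp.single 2 m (lp.single 2 t e))
      = lp.single 2 m (lp.single 2 (Function.update t i (t i + 1)) e) := by
  apply lp.ext
  funext m'
  apply lp.ext
  funext l
  rw [hM _ m' l]
  by_cases hm : m' = m
  · subst hm
    rw [lp.single_apply_self, lp.single_apply_self]
    exact shift_single_pointwise i t l e
  · rw [lp.single_apply_ne 2 m _ hm, lp.single_apply_ne 2 m _ hm]
    have z : ∀ k : Fin n → ℕ, (0 : lp (fun _ : Fin n → ℕ => E) 2) k = 0 := fun _ => rfl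
    rw [z, z, ite_self]
end shiftLemmas

end S8LP

lemma iso_of_hilbertDimEq {E F : Type u} [NormedAddCommGroup E] [InnerProductSpace ℂ E]
    [CompleteSpace E] [NormedAddCommGroup F] [InnerProductSpace ℂ F] [CompleteSpace F]
    (h : HilbertDimEq E F) : Nonempty (E ≃ₗᵢ[ℂ] F) := by
  obtain ⟨wE, bE, -⟩ := exists_hilbertBasis ℂ E
  obtain ⟨wF, bF, -⟩ := exists_hilbertBasis ℂ F
  obtain ⟨e⟩ : Nonempty (wE ≃ wF) := Cardinal.lift_mk_eq'.mp (h wE wF bE bF)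
  have hv : Orthonormal ℂ (⇑bF ∘ ⇑e) := bF.orthonormal.comp e e.injective
  have hsp : ⊤ ≤ (Submodule.span ℂ (Set.range (⇑bF ∘ ⇑e))).topologicalClosure := by
    rw [Set.range_comp, e.surjective.range_eq, Set.image_univ]
    rw [bF.dense_span]
  exact ⟨bE.repr.trans (HilbertBasis.mk hv hsp).repr.symm⟩


/-- For a doubly commuting tuple of shifts `(V, V₁, …, Vₙ)` with joint wandering
subspace `D = ker V* ∩ ⋂ᵢ ker Vᵢ*`: the subspaces `U^𝐤 D` are pairwise orthogonal with dense
linear span, the map `Γ(U^𝐤 η) = e_𝐤 ⊗ η` extends to a unitary `H → ℓ²(ℕ^{n+1}, D)` intertwining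
`Uⱼ` with the coordinate shifts, and consequently `(V, V₁, …, Vₙ)` is unitarily equivalent to
`(M_z, M_{κ₁}, …, M_{κₙ})` on `ℓ²(ℕ, ℓ²(ℕⁿ, E))` for any Hilbert space `E` with
`dim E = dim D`. -/
theorem statement8 (n : ℕ) (hn : 1 ≤ n)
    {H : Type u} [NormedAddCommGroup H] [InnerProductSpace ℂ H] [CompleteSpace H]
    (V : H →L[ℂ] H) (Vs : Fin n → (H →L[ℂ] H))
    (hV : IsShiftOp V) (hVs : ∀ i, IsShiftOp (Vs i))
    (hcomm : ∀ i, V ∘L Vs i = Vs i ∘L V)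
    (hcomm' : ∀ i j, Vs i ∘L Vs j = Vs j ∘L Vs i)
    (hdc : ∀ i, ContinuousLinearMap.adjoint V ∘L Vs i = Vs i ∘L ContinuousLinearMap.adjoint V)
    (hdc' : ∀ i j, i ≠ j →
      ContinuousLinearMap.adjoint (Vs i) ∘L Vs j = Vs j ∘L ContinuousLinearMap.adjoint (Vs i))
    (U : Fin (n + 1) → (H →L[ℂ] H)) (hU0 : U 0 = V) (hUs : ∀ i : Fin n, U i.succ = Vs i)
    (D : Submodule ℂ H)
    (hD : D = LinearMap.ker (ContinuousLinearMap.adjoint V : H →ₗ[ℂ] H) ⊓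
      ⨅ i, LinearMap.ker (ContinuousLinearMap.adjoint (Vs i) : H →ₗ[ℂ] H))
    (SS : Fin (n + 1) →
      (lp (fun _ : Fin (n + 1) → ℕ => ↥D) 2 →L[ℂ] lp (fun _ : Fin (n + 1) → ℕ => ↥D) 2))
    (hSS : ∀ j, IsCoordShift j (SS j)) :
    (∀ k l : Fin (n + 1) → ℕ, k ≠ l →
      ∀ x ∈ D, ∀ y ∈ D, (inner ℂ (prodPow U k x) (prodPow U l y) : ℂ) = 0) ∧
    ((⨆ k : Fin (n + 1) → ℕ, D.map (prodPow U k : H →ₗ[ℂ] H)).topologicalClosure = ⊤) ∧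
    (∃ Γ : H ≃ₗᵢ[ℂ] lp (fun _ : Fin (n + 1) → ℕ => ↥D) 2,
      (∀ (k : Fin (n + 1) → ℕ) (η : ↥D), Γ (prodPow U k (η : H)) = lp.single 2 k η) ∧
      (∀ (j : Fin (n + 1)) (f : H), Γ (U j f) = SS j (Γ f))) ∧
    (∀ (E : Type u) [NormedAddCommGroup E] [InnerProductSpace ℂ E] [CompleteSpace E],
      HilbertDimEq E ↥D →
      ∀ Mz : ModelSpace n E →L[ℂ] ModelSpace n E, IsUnilateralShift Mz →
      ∀ Mk : Fin n → (ModelSpace n E →L[ℂ] ModelSpace n E), (∀ i, IsKappa i (Mk i)) →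
      ∃ Γ' : H ≃ₗᵢ[ℂ] ModelSpace n E,
        (∀ f, Γ' (V f) = Mz (Γ' f)) ∧ ∀ (i : Fin n) f, Γ' (Vs i f) = Mk i (Γ' f)) := by
  classical
  have hUIso : ∀ (j : Fin (n + 1)) (f : H), ‖U j f‖ = ‖f‖ := by
    intro j
    refine Fin.cases ?_ ?_ j
    · rw [hU0]; exact hV.1
    · intro i; rw [hUs i]; exact (hVs i).1
  have hUT : ∀ (j : Fin (n + 1)) (f : H),
      Tendsto (fun i : ℕ => ‖((ContinuousLinearMap.adjoint (U j)) ^ i) f‖) atTop (nhds 0) := by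
    intro j
    refine Fin.cases ?_ ?_ j
    · rw [hU0]; exact hV.2
    · intro i; rw [hUs i]; exact (hVs i).2
  have hUC : ∀ i j, Commute (U i) (U j) := by
    intro i j
    refine Fin.cases ?_ ?_ i
    · refine Fin.cases ?_ ?_ j
      · exact Commute.refl _
      · intro j'; rw [hU0, hUs]; exact hcomm j'
    · intro i'
      refine Fin.cases ?_ ?_ j
      · rw [hU0, hUs]; exact (show Commute V (Vs i') from hcomm i').symm
      · intro j'; rw [hUs, hUs]; exact hcomm' i' j'
  have hUDC : ∀ i j, i ≠ j → Commute (ContinuousLinearMap.adjoint (U i)) (U j) := by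
    intro i j
    refine Fin.cases ?_ ?_ i
    · refine Fin.cases ?_ ?_ j
      · intro hij; exact absurd rfl hij
      · intro j' _; rw [hU0, hUs]; exact hdc j'
    · intro i'
      refine Fin.cases ?_ ?_ j
      · intro _
        rw [hUs, hU0]
        have h1 := congrArg (fun T : H →L[ℂ] H => ContinuousLinearMap.adjoint T) (hdc i')
        simp only [adjoint_comp, adjoint_adjoint] at h1
        exact h1
      · intro j' hij
        rw [hUs, hUs]
        exact hdc' i' j' (fun h => hij (congrArg Fin.succ h))
  have hD' : ∀ x, x ∈ D ↔ ∀ j : Fin (n + 1), ContinuousLinearMap.adjoint (U j) x = 0 := by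
    intro x
    rw [hD, Submodule.mem_inf, Submodule.mem_iInf]
    constructor
    · rintro ⟨h1, h2⟩ j
      refine Fin.cases ?_ ?_ j
      · rw [hU0]; exact LinearMap.mem_ker.mp h1
      · intro i; rw [hUs]; exact LinearMap.mem_ker.mp (h2 i)
    · intro hall
      refine ⟨LinearMap.mem_ker.mpr ?_, fun i => LinearMap.mem_ker.mpr ?_⟩
      · rw [← hU0]; exact hall 0
      · rw [← hUs]; exact hall i.succ
  have part1 : ∀ k l : Fin (n + 1) → ℕ, k ≠ l →
      ∀ x ∈ D, ∀ y ∈ D, (inner ℂ (prodPow U k x) (prodPow U l y) : ℂ) = 0 := by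
    intro k l hkl x hx y hy
    exact orth_main U hUIso hUC hUDC k l hkl x y
      (fun j => (hD' x).mp hx j) (fun j => (hD' y).mp hy j)
  have part2 : (⨆ k : Fin (n + 1) → ℕ, D.map (prodPow U k : H →ₗ[ℂ] H)).topologicalClosure = ⊤ :=
    density_main U hUIso hUC hUDC hUT D hD'
  have hDclosed : IsClosed (D : Set H) := by
    rw [hD]
    have hc : ((LinearMap.ker (ContinuousLinearMap.adjoint V : H →ₗ[ℂ] H) ⊓
        ⨅ i, LinearMap.ker (ContinuousLinearMap.adjoint (Vs i) : H →ₗ[ℂ] H) : Submodule ℂ H) : Set H)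
        = (LinearMap.ker (ContinuousLinearMap.adjoint V : H →ₗ[ℂ] H) : Set H) ∩
          ⋂ i, (LinearMap.ker (ContinuousLinearMap.adjoint (Vs i) : H →ₗ[ℂ] H) : Set H) := by
      rw [Submodule.coe_inf, Submodule.coe_iInf]
    rw [hc]
    exact (ContinuousLinearMap.isClosed_ker _).inter
      (isClosed_iInter fun i => ContinuousLinearMap.isClosed_ker _)
  haveI : CompleteSpace ↥D := hDclosed.completeSpace_coe
  let VLI : (Fin (n + 1) → ℕ) → (↥D →ₗᵢ[ℂ] H) := fun k =>
    { toLinearMap := ((prodPow U k : H →L[ℂ] H) : H →ₗ[ℂ] H).comp D.subtype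
      norm_map' := fun x => norm_prodPow U hUIso k x }
  have hOF : OrthogonalFamily ℂ (fun _ : Fin (n + 1) → ℕ => ↥D) VLI := by
    intro k l hkl x y
    exact part1 k l hkl x x.2 y y.2
  have hrange : ∀ k, LinearMap.range (VLI k).toLinearMap = D.map (prodPow U k : H →ₗ[ℂ] H) := by
    intro k
    ext z
    constructor
    · rintro ⟨η, rfl⟩; exact ⟨η, η.2, rfl⟩
    · rintro ⟨η, hη, rfl⟩; exact ⟨⟨η, hη⟩, rfl⟩
  have hTotal : ⊤ ≤ (⨆ k, LinearMap.range (VLI k).toLinearMap).topologicalClosure := by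
    have he : (⨆ k, LinearMap.range (VLI k).toLinearMap)
        = ⨆ k : Fin (n + 1) → ℕ, D.map (prodPow U k : H →ₗ[ℂ] H) := iSup_congr hrange
    rw [he, part2]
  have hsum : IsHilbertSum ℂ (fun _ : Fin (n + 1) → ℕ => ↥D) VLI := IsHilbertSum.mk hOF hTotal
  have hΓ1 : ∀ (k : Fin (n + 1) → ℕ) (η : ↥D),
      hsum.linearIsometryEquiv (prodPow U k (η : H)) = lp.single 2 k η := by
    intro k η
    have h := hsum.linearIsometryEquiv_symm_apply_single (i := k) η
    have h2 : prodPow U k (η : H) = hsum.linearIsometryEquiv.symm (lp.single 2 k η) := h.symm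
    rw [h2, LinearIsometryEquiv.apply_symm_apply]
  have hdense : Dense ((⨆ k : Fin (n + 1) → ℕ, D.map (prodPow U k : H →ₗ[ℂ] H) : Submodule ℂ H) : Set H) :=
    Submodule.dense_iff_topologicalClosure_eq_top.mpr part2
  have hΓ2 : ∀ (j : Fin (n + 1)) (f : H),
      hsum.linearIsometryEquiv (U j f) = SS j (hsum.linearIsometryEquiv f) := by
    intro j
    have hcont1 : Continuous (fun f : H => hsum.linearIsometryEquiv (U j f)) :=
      hsum.linearIsometryEquiv.continuous.comp (U j).continuous
    have hcont2 : Continuous (fun f : H => SS j (hsum.linearIsometryEquiv f)) :=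
      (SS j).continuous.comp hsum.linearIsometryEquiv.continuous
    have heq : Set.EqOn (fun f : H => hsum.linearIsometryEquiv (U j f))
        (fun f : H => SS j (hsum.linearIsometryEquiv f))
        ((⨆ k : Fin (n + 1) → ℕ, D.map (prodPow U k : H →ₗ[ℂ] H) : Submodule ℂ H) : Set H) := by
      intro x hx
      refine Submodule.iSup_induction (x := x)
        (motive := fun x => hsum.linearIsometryEquiv (U j x) = SS j (hsum.linearIsometryEquiv x))
        _ (SetLike.mem_coe.mp hx) ?_ ?_ ?_
      · rintro k x ⟨η, hη, rfl⟩
        have e1 : U j ((prodPow U k) η) = prodPow U (Function.update k j (k j + 1)) η := by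
          have h3 := DFunLike.congr_fun (prodPow_mul_left U hUC k j) η
          simpa using h3
        show hsum.linearIsometryEquiv (U j (prodPow U k η)) =
          SS j (hsum.linearIsometryEquiv (prodPow U k η))
        rw [e1, show η = ((⟨η, hη⟩ : ↥D) : H) from rfl, hΓ1, hΓ1, coordShift_single (hSS j)]
      · simp only [map_zero]
      · intro x y hx hy
        simp only [map_add, hx, hy]
    intro f
    exact congrFun (Continuous.ext_on hdense hcont1 hcont2 heq) f
  refine ⟨part1, part2, ⟨hsum.linearIsometryEquiv, hΓ1, hΓ2⟩, ?_⟩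
  intro E _inst1 _inst2 _inst3 hdim Mz hMz Mk hMk
  obtain ⟨ε⟩ := iso_of_hilbertDimEq hdim
  let Wmap : (Fin (n + 1) → ℕ) → (↥D →ₗᵢ[ℂ] ModelSpace n E) := fun k =>
    (singleLI (k 0)).comp ((singleLI (Fin.tail k)).comp ε.symm.toLinearIsometry)
  have hW : ∀ k (η : ↥D),
      Wmap k η = lp.single 2 (k 0) (lp.single 2 (Fin.tail k) (ε.symm η)) := by
    intro k η; rfl
  have hOF' : OrthogonalFamily ℂ (fun _ : Fin (n + 1) → ℕ => ↥D) Wmap := by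
    intro k l hkl x y
    rw [hW, hW, inner_single_single]
    by_cases h0 : k 0 = l 0
    · have ht : Fin.tail k ≠ Fin.tail l := by
        intro ht
        apply hkl
        funext j
        refine Fin.cases ?_ ?_ j
        · exact h0
        · intro i2; exact congrFun ht i2
      rw [if_pos h0, inner_single_single, if_neg ht]
    · rw [if_neg h0]
  have hTot' : ⊤ ≤ (⨆ k, LinearMap.range (Wmap k).toLinearMap).topologicalClosure := by
    intro f _
    have hNc : IsClosed
        (((⨆ k, LinearMap.range (Wmap k).toLinearMap).topologicalClosure : Submodule ℂ _) :
          Set (ModelSpace n E)) := Submodule.isClosed_topologicalClosure _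
    apply mem_closedSubmodule_of_single hNc
    intro m g
    have key : ∀ g : lp (fun _ : Fin n → ℕ => E) 2,
        g ∈ Submodule.comap (singleLI (ι := ℕ) m).toLinearMap
          ((⨆ k, LinearMap.range (Wmap k).toLinearMap).topologicalClosure) := by
      apply mem_closedSubmodule_of_single
      · exact hNc.preimage (singleLI (ι := ℕ) m).continuous
      · intro t e'
        have h4 : lp.single 2 m (lp.single 2 t e') = Wmap (Fin.cons m t) (ε e') := by
          rw [hW]
          rw [show (Fin.cons m t : Fin (n + 1) → ℕ) 0 = m from rfl,
            Fin.tail_cons, LinearIsometryEquiv.symm_apply_apply]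
        have h5 : lp.single 2 m (lp.single 2 t e') ∈
            (⨆ k, LinearMap.range (Wmap k).toLinearMap).topologicalClosure := by
          rw [h4]
          exact Submodule.le_topologicalClosure _
            (Submodule.mem_iSup_of_mem (Fin.cons m t) ⟨ε e', rfl⟩)
        exact Submodule.mem_comap.mpr h5
    exact key g
  have hsum' : IsHilbertSum ℂ (fun _ : Fin (n + 1) → ℕ => ↥D) Wmap := IsHilbertSum.mk hOF' hTot'
  set Γ' : H ≃ₗᵢ[ℂ] ModelSpace n E :=
    hsum.linearIsometryEquiv.trans hsum'.linearIsometryEquiv.symm with hΓ'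
  have hbase : ∀ (k : Fin (n + 1) → ℕ) (η : ↥D),
      Γ' (prodPow U k (η : H)) = lp.single 2 (k 0) (lp.single 2 (Fin.tail k) (ε.symm η)) := by
    intro k η
    rw [hΓ', LinearIsometryEquiv.trans_apply, hΓ1]
    rw [hsum'.linearIsometryEquiv_symm_apply_single]
    exact hW k η
  refine ⟨Γ', ?_, ?_⟩
  · -- Mz intertwining
    have hcont1 : Continuous (fun f : H => Γ' (V f)) := Γ'.continuous.comp V.continuous
    have hcont2 : Continuous (fun f : H => Mz (Γ' f)) := Mz.continuous.comp Γ'.continuous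
    have heq : Set.EqOn (fun f : H => Γ' (V f)) (fun f : H => Mz (Γ' f))
        ((⨆ k : Fin (n + 1) → ℕ, D.map (prodPow U k : H →ₗ[ℂ] H) : Submodule ℂ H) : Set H) := by
      intro x hx
      refine Submodule.iSup_induction (x := x)
        (motive := fun x => Γ' (V x) = Mz (Γ' x)) _ (SetLike.mem_coe.mp hx) ?_ ?_ ?_
      · rintro k x ⟨η, hη, rfl⟩
        show Γ' (V (prodPow U k η)) = Mz (Γ' (prodPow U k η))
        have e1 : V ((prodPow U k) η) = prodPow U (Function.update k 0 (k 0 + 1)) η := by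
          have h3 := DFunLike.congr_fun (prodPow_mul_left U hUC k 0) η
          rw [hU0] at h3
          simpa using h3
        have tail0 : Fin.tail (Function.update k 0 (k 0 + 1)) = Fin.tail k := by
          funext i
          exact Function.update_of_ne (Fin.succ_ne_zero i) _ k
        rw [e1, show η = ((⟨η, hη⟩ : ↥D) : H) from rfl, hbase, hbase,
          unilateralShift_single hMz, Function.update_self, tail0]
      · simp only [map_zero]
      · intro x y hx hy
        simp only [map_add, hx, hy]
    intro f
    exact congrFun (Continuous.ext_on hdense hcont1 hcont2 heq) f
  · -- Mk intertwining
    intro i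
    have hcont1 : Continuous (fun f : H => Γ' (Vs i f)) := Γ'.continuous.comp (Vs i).continuous
    have hcont2 : Continuous (fun f : H => Mk i (Γ' f)) := (Mk i).continuous.comp Γ'.continuous
    have heq : Set.EqOn (fun f : H => Γ' (Vs i f)) (fun f : H => Mk i (Γ' f))
        ((⨆ k : Fin (n + 1) → ℕ, D.map (prodPow U k : H →ₗ[ℂ] H) : Submodule ℂ H) : Set H) := by
      intro x hx
      refine Submodule.iSup_induction (x := x)
        (motive := fun x => Γ' (Vs i x) = Mk i (Γ' x)) _ (SetLike.mem_coe.mp hx) ?_ ?_ ?_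
      · rintro k x ⟨η, hη, rfl⟩
        show Γ' (Vs i (prodPow U k η)) = Mk i (Γ' (prodPow U k η))
        have e1 : Vs i ((prodPow U k) η)
            = prodPow U (Function.update k i.succ (k i.succ + 1)) η := by
          have h3 := DFunLike.congr_fun (prodPow_mul_left U hUC k i.succ) η
          rw [hUs i] at h3
          simpa using h3
        have upd0 : (Function.update k i.succ (k i.succ + 1)) 0 = k 0 :=
          Function.update_of_ne (Fin.succ_ne_zero i).symm _ k
        have tailsucc : Fin.tail (Function.update k i.succ (k i.succ + 1))
            = Function.update (Fin.tail k) i (Fin.tail k i + 1) := by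
          funext t
          show (Function.update k i.succ (k i.succ + 1)) t.succ = _
          by_cases h : t = i
          · subst h
            rw [Function.update_self, Function.update_self]
            rfl
          · rw [Function.update_of_ne (fun hh => h (Fin.succ_inj.mp hh)),
              Function.update_of_ne h]
            rfl
        rw [e1, show η = ((⟨η, hη⟩ : ↥D) : H) from rfl, hbase, hbase,
          kappa_single (hMk i), upd0, tailsucc]
      · simp only [map_zero]
      · intro x y hx hy
        simp only [map_add, hx, hy]
    intro f
    exact congrFun (Continuous.ext_on hdense hcont1 hcont2 heq) f
end
end

section
/- Let n ≥ 1, let E be a complex Hilbert space, K = ℓ²(ℕⁿ, E), and H = ℓ²(ℕ, K) with unilateral shift M_z and entrywise coordinate-shift operators M_{κ₁}, …, M_{κₙ}. Let S ⊆ H be a closed subspace invariant under M_z and all M_{κᵢ}, let W = S ⊖ M_z S, let Π : ℓ²(ℕ, W) → H be the isometry determined by Π(e_m ⊗ η) = M_zᵐ η (so range Π = S and Π S_W = M_z Π), and set Tᵢ = Π* M_{κᵢ} Π. Suppose W̃ is another Hilbert space, Π̃ : ℓ²(ℕ, W̃) → H is an isometry with range S satisfying Π̃ S_{W̃} = M_z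 Π̃ and Π̃ T̃ᵢ = M_{κᵢ} Π̃, where each T̃ᵢ is a shift on ℓ²(ℕ, W̃) commuting with S_{W̃}. Then there exists a unitary τ : W → W̃ such that Π = Π̃ ∘ (I ⊗ τ) and (I ⊗ τ) Tᵢ = T̃ᵢ (I ⊗ τ) for all i = 1, …, n, where I ⊗ τ : ℓ²(ℕ, W) → ℓ²(ℕ, W̃) acts entrywise by ((I ⊗ τ) g)(m) = τ(g(m)). -/
noncomputable section

open Filter Topology MeasureTheory ContinuousLinearMap

universe u v

local notation "⟪" x ", " y "⟫" => @inner ℂ _ _ x y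

lemma aux_shift_single {W : Type*} [NormedAddCommGroup W] [InnerProductSpace ℂ W]
    (S : lp (fun _ : ℕ => W) 2 →L[ℂ] lp (fun _ : ℕ => W) 2) (hS : IsUnilateralShift S)
    (m : ℕ) (η : W) : S (lp.single 2 m η) = lp.single 2 (m + 1) η := by
  apply lp.ext
  funext j
  cases j with
  | zero => rw [(hS _).1, lp.single_apply_ne _ _ _ (by omega)]
  | succ k =>
      rw [(hS _).2 k]
      simp [lp.single_apply, Pi.single_apply]

lemma aux_supp0 {W : Type*} [NormedAddCommGroup W] [InnerProductSpace ℂ W]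
    (g : lp (fun _ : ℕ => W) 2) (h : ∀ m : ℕ, g (m + 1) = 0) :
    g = lp.single 2 0 (g 0) := by
  apply lp.ext
  funext j
  cases j with
  | zero => rw [lp.single_apply_self]
  | succ k => rw [h k, lp.single_apply_ne _ _ _ (by omega)]

lemma aux_orth {W : Type*} [NormedAddCommGroup W] [InnerProductSpace ℂ W]
    (S : lp (fun _ : ℕ => W) 2 →L[ℂ] lp (fun _ : ℕ => W) 2) (hS : IsUnilateralShift S)
    (g : lp (fun _ : ℕ => W) 2) (h : ∀ f, ⟪g, S f⟫ = 0) :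
    g = lp.single 2 0 (g 0) := by
  apply aux_supp0
  intro m
  have h2 : ∀ ξ : W, ⟪g (m + 1), ξ⟫ = 0 := by
    intro ξ
    have := h (lp.single 2 m ξ)
    rw [aux_shift_single S hS, lp.inner_single_right] at this
    exact this
  have := h2 (g (m + 1))
  rwa [inner_self_eq_zero] at this

lemma aux_single_orth {W : Type*} [NormedAddCommGroup W] [InnerProductSpace ℂ W]
    (S : lp (fun _ : ℕ => W) 2 →L[ℂ] lp (fun _ : ℕ => W) 2) (hS : IsUnilateralShift S)
    (η : W) (f : lp (fun _ : ℕ => W) 2) : ⟪lp.single 2 0 η, S f⟫ = 0 := by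
  rw [lp.inner_single_left, (hS f).1, inner_zero_right]

lemma aux_diag (W : Type u) (W' : Type v)
  [NormedAddCommGroup W] [InnerProductSpace ℂ W] [CompleteSpace W]
  [NormedAddCommGroup W'] [InnerProductSpace ℂ W'] [CompleteSpace W']
  (U : lp (fun _ : ℕ => W) 2 ≃ₗᵢ[ℂ] lp (fun _ : ℕ => W') 2)
  (SW : lp (fun _ : ℕ => W) 2 →L[ℂ] lp (fun _ : ℕ => W) 2) (hSW : IsUnilateralShift SW)
  (SW' : lp (fun _ : ℕ => W') 2 →L[ℂ] lp (fun _ : ℕ => W') 2) (hSW' : IsUnilateralShift SW')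
  (hUS : ∀ g, U (SW g) = SW' (U g)) :
  ∃ (τ : W ≃ₗᵢ[ℂ] W'),
    ∀ (g : lp (fun _ : ℕ => W) 2) (m : ℕ), (U g) m = τ (g m) := by
  classical
  -- diagonal part
  have hUS' : ∀ h, U.symm (SW' h) = SW (U.symm h) := by
    intro h
    apply U.injective
    rw [hUS, U.apply_symm_apply, U.apply_symm_apply]
  have hg0 : ∀ η : W, U (lp.single 2 0 η) = lp.single 2 0 ((U (lp.single 2 0 η)) 0) := by
    intro η
    apply aux_orth SW' hSW'
    intro f
    have : SW' f = U (SW (U.symm f)) := by rw [hUS, U.apply_symm_apply]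
    rw [this, U.inner_map_map]
    exact aux_single_orth SW hSW η _
  set τ0 : W →ₗᵢ[ℂ] W' :=
    { toFun := fun η => (U (lp.single 2 0 η)) 0
      map_add' := by
        intro a b
        dsimp only
        have hsingle : lp.single (E := fun _ : ℕ => W) 2 0 (a + b)
            = lp.single 2 0 a + lp.single 2 0 b := by
          apply lp.ext
          funext j
          simp only [lp.single_apply, Pi.single_apply, lp.coeFn_add, Pi.add_apply]
          split <;> simp
        rw [hsingle, map_add, lp.coeFn_add, Pi.add_apply]
      map_smul' := by
        intro c a
        dsimp only [RingHom.id_apply]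
        rw [lp.single_smul, U.map_smul, lp.coeFn_smul, Pi.smul_apply]
      norm_map' := by
        intro η
        have h1 : ‖U (lp.single (E := fun _ : ℕ => W) 2 0 η)‖ = ‖η‖ := by
          rw [U.norm_map]
          exact lp.norm_single (E := fun _ : ℕ => W) (p := 2) (by norm_num) 0 η
        calc ‖(U (lp.single 2 0 η)) 0‖
            = ‖lp.single (E := fun _ : ℕ => W') 2 0 ((U (lp.single 2 0 η)) 0)‖ :=
              (lp.norm_single (E := fun _ : ℕ => W') (p := 2) (by norm_num) 0 ((U (lp.single 2 0 η)) 0)).symm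
          _ = ‖U (lp.single (E := fun _ : ℕ => W) 2 0 η)‖ := by rw [← hg0]
          _ = ‖η‖ := h1 } with hτ0
  have hτ0single : ∀ η : W, U (lp.single 2 0 η) = lp.single 2 0 (τ0 η) := by
    intro η; exact hg0 η
  have hsurj : Function.Surjective τ0 := by
    intro ξ
    set h := U.symm (lp.single 2 0 ξ) with hh
    have hh0 : h = lp.single 2 0 (h 0) := by
      apply aux_orth SW hSW
      intro f
      have : ⟪h, SW f⟫ = ⟪U h, U (SW f)⟫ := (U.inner_map_map _ _).symm
      rw [this, hUS, hh, U.apply_symm_apply]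
      exact aux_single_orth SW' hSW' ξ (U f)
    refine ⟨h 0, ?_⟩
    have : U h = lp.single 2 0 ξ := U.apply_symm_apply _
    have h2 : U (lp.single 2 0 (h 0)) = lp.single 2 0 ξ := by rw [← hh0, this]
    have h3 := congrArg (fun x : lp (fun _ : ℕ => W') 2 => x 0) h2
    exact (by simpa [lp.single_apply_self] using h3 : (U (lp.single 2 0 (h 0))) 0 = ξ)
  set τ : W ≃ₗᵢ[ℂ] W' := LinearIsometryEquiv.ofSurjective τ0 hsurj with hτ
  have hτeq : ∀ η, τ η = τ0 η := fun η => rfl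
  have hUsingle : ∀ (m : ℕ) (η : W), U (lp.single 2 m η) = lp.single 2 m (τ η) := by
    intro m
    induction m with
    | zero => intro η; rw [hτeq]; exact hτ0single η
    | succ k ih =>
        intro η
        rw [← aux_shift_single SW hSW k η, hUS, ih, aux_shift_single SW' hSW']
  refine ⟨τ, ?_⟩
  intro g m
  have hUsymm : ∀ (m : ℕ) (ξ : W'), U.symm (lp.single 2 m ξ) = lp.single 2 m (τ.symm ξ) := by
    intro m ξ
    apply U.injective
    rw [U.apply_symm_apply, hUsingle, τ.apply_symm_apply]
  apply ext_inner_right ℂ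
  intro ξ
  calc ⟪(U g) m, ξ⟫ = ⟪U g, lp.single 2 m ξ⟫ := (lp.inner_single_right _ _ _).symm
    _ = ⟪U g, U (U.symm (lp.single 2 m ξ))⟫ := by rw [U.apply_symm_apply]
    _ = ⟪g, lp.single 2 m (τ.symm ξ)⟫ := by rw [U.inner_map_map, hUsymm]
    _ = ⟪g m, τ.symm ξ⟫ := lp.inner_single_right _ _ _
    _ = ⟪τ (g m), τ (τ.symm ξ)⟫ := (τ.inner_map_map _ _).symm
    _ = ⟪τ (g m), ξ⟫ := by rw [τ.apply_symm_apply]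



lemma aux_main {n : ℕ} {H : Type*} [NormedAddCommGroup H] [InnerProductSpace ℂ H]
    [CompleteSpace H]
    {Wa : Type*} [NormedAddCommGroup Wa] [InnerProductSpace ℂ Wa] [CompleteSpace Wa]
    {W' : Type*} [NormedAddCommGroup W'] [InnerProductSpace ℂ W'] [CompleteSpace W']
    (Mz : H →L[ℂ] H) (Mk : Fin n → (H →L[ℂ] H))
    (S : Submodule ℂ H) (hSk : ∀ i, ∀ f ∈ S, Mk i f ∈ S)
    (SW : lp (fun _ : ℕ => Wa) 2 →L[ℂ] lp (fun _ : ℕ => Wa) 2) (hSW : IsUnilateralShift SW)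
    (Θ : lp (fun _ : ℕ => Wa) 2 →ₗᵢ[ℂ] H)
    (hΘr : Set.range Θ = (S : Set H))
    (hΘS : ∀ g, Θ (SW g) = Mz (Θ g))
    (T : Fin n → (lp (fun _ : ℕ => Wa) 2 →L[ℂ] lp (fun _ : ℕ => Wa) 2))
    (hT : ∀ (i : Fin n) g,
      T i g = ContinuousLinearMap.adjoint Θ.toContinuousLinearMap (Mk i (Θ g)))
    (SW' : lp (fun _ : ℕ => W') 2 →L[ℂ] lp (fun _ : ℕ => W') 2) (hSW' : IsUnilateralShift SW')
    (Θ' : lp (fun _ : ℕ => W') 2 →ₗᵢ[ℂ] H)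
    (hΘ'r : Set.range Θ' = (S : Set H))
    (hΘ'S : ∀ g, Θ' (SW' g) = Mz (Θ' g))
    (T' : Fin n → (lp (fun _ : ℕ => W') 2 →L[ℂ] lp (fun _ : ℕ => W') 2))
    (hΘ'T : ∀ (i : Fin n) g, Θ' (T' i g) = Mk i (Θ' g)) :
    ∃ (τ : Wa ≃ₗᵢ[ℂ] W') (Uτ : lp (fun _ : ℕ => Wa) 2 ≃ₗᵢ[ℂ] lp (fun _ : ℕ => W') 2),
      (∀ (g : lp (fun _ : ℕ => Wa) 2) (m : ℕ), (Uτ g) m = τ (g m)) ∧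
      (∀ g, Θ g = Θ' (Uτ g)) ∧
      (∀ (i : Fin n) g, Uτ (T i g) = T' i (Uτ g)) := by
  classical
  have hrange : LinearMap.range Θ.toLinearMap = LinearMap.range Θ'.toLinearMap := by
    apply SetLike.coe_injective
    rw [LinearMap.coe_range, LinearMap.coe_range]
    show Set.range Θ = Set.range Θ'
    rw [hΘr, hΘ'r]
  set U : lp (fun _ : ℕ => Wa) 2 ≃ₗᵢ[ℂ] lp (fun _ : ℕ => W') 2 :=
    Θ.equivRange.trans ((LinearIsometryEquiv.ofEq _ _ hrange).trans Θ'.equivRange.symm)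
    with hUdef
  have hU : ∀ g, Θ' (U g) = Θ g := by
    intro g
    have h1 : U g = Θ'.equivRange.symm
        ((LinearIsometryEquiv.ofEq _ _ hrange) (Θ.equivRange g)) := rfl
    have h2 : Θ'.equivRange (U g)
        = (LinearIsometryEquiv.ofEq _ _ hrange) (Θ.equivRange g) := by
      rw [h1, LinearIsometryEquiv.apply_symm_apply]
    have h3 := congrArg (Subtype.val) h2
    have h4 : (Θ'.equivRange (U g) : H) = Θ' (U g) := rfl
    have h5 : (((LinearIsometryEquiv.ofEq _ _ hrange) (Θ.equivRange g) : 
        LinearMap.range Θ'.toLinearMap) : H) = Θ g := rfl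
    rw [← h4, h3, h5]
  have hUS : ∀ g, U (SW g) = SW' (U g) := by
    intro g
    apply Θ'.injective
    rw [hU, hΘ'S, hU, hΘS]
  obtain ⟨τ, hτ⟩ := aux_diag Wa W' U SW hSW SW' hSW' hUS
  have hΘT : ∀ (i : Fin n) (g : lp (fun _ : ℕ => Wa) 2), Θ (T i g) = Mk i (Θ g) := by
    intro i g
    have hmem : Mk i (Θ g) ∈ Set.range Θ := by
      rw [hΘr]
      refine SetLike.mem_coe.mpr (hSk i _ (SetLike.mem_coe.mp ?_))
      rw [← hΘr]
      exact ⟨g, rfl⟩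
    obtain ⟨x, hx⟩ := hmem
    have hadj : ContinuousLinearMap.adjoint Θ.toContinuousLinearMap (Θ x) = x := by
      apply ext_inner_right ℂ
      intro v
      rw [ContinuousLinearMap.adjoint_inner_left]
      show (inner ℂ (Θ x) (Θ.toContinuousLinearMap v) : ℂ) = inner ℂ x v
      rw [LinearIsometry.coe_toContinuousLinearMap]
      exact Θ.inner_map_map x v
    rw [hT, ← hx, hadj, hx]
  refine ⟨τ, U, hτ, fun g => (hU g).symm, ?_⟩
  intro i g
  apply Θ'.injective
  rw [hU, hΘT, hΘ'T, hU]

set_option maxHeartbeats 1000000 in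
/-- Uniqueness of the Beurling–Lax–Halmos data of an invariant subspace
`S ⊆ ℓ²(ℕ, ℓ²(ℕⁿ, E))`: if `Θ̃ : ℓ²(ℕ, W̃) → H` is another shift-intertwining isometry with
range `S` and `Θ̃ T̃ᵢ = M_{κᵢ} Θ̃` for shifts `T̃ᵢ` commuting with `S_{W̃}`, then there is a
unitary `τ : W → W̃` with `Θ = Θ̃ (I ⊗ τ)` and `(I ⊗ τ) Tᵢ = T̃ᵢ (I ⊗ τ)`. -/
theorem statement12 (n : ℕ) (hn : 1 ≤ n)
    (E : Type u) [NormedAddCommGroup E] [InnerProductSpace ℂ E] [CompleteSpace E]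
    (Mz : ModelSpace n E →L[ℂ] ModelSpace n E) (hMz : IsUnilateralShift Mz)
    (Mk : Fin n → (ModelSpace n E →L[ℂ] ModelSpace n E)) (hMk : ∀ i, IsKappa i (Mk i))
    (S : Submodule ℂ (ModelSpace n E)) (hScl : IsClosed (S : Set (ModelSpace n E)))
    (hSz : ∀ f ∈ S, Mz f ∈ S) (hSk : ∀ i, ∀ f ∈ S, Mk i f ∈ S)
    (W : Submodule ℂ (ModelSpace n E)) (hW : W = S ⊓ (S.map Mz.toLinearMap)ᗮ) [CompleteSpace ↥W]
    (SW : lp (fun _ : ℕ => ↥W) 2 →L[ℂ] lp (fun _ : ℕ => ↥W) 2) (hSW : IsUnilateralShift SW)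
    (Θ : lp (fun _ : ℕ => ↥W) 2 →ₗᵢ[ℂ] ModelSpace n E)
    (hΘ : ∀ (m : ℕ) (η : ↥W), Θ (lp.single 2 m η) = (Mz ^ m) (η : ModelSpace n E))
    (hΘr : Set.range Θ = (S : Set (ModelSpace n E)))
    (hΘS : ∀ g, Θ (SW g) = Mz (Θ g))
    (T : Fin n → (lp (fun _ : ℕ => ↥W) 2 →L[ℂ] lp (fun _ : ℕ => ↥W) 2))
    (hT : ∀ (i : Fin n) g,
      T i g = ContinuousLinearMap.adjoint Θ.toContinuousLinearMap (Mk i (Θ g)))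
    (W' : Type v) [NormedAddCommGroup W'] [InnerProductSpace ℂ W'] [CompleteSpace W']
    (SW' : lp (fun _ : ℕ => W') 2 →L[ℂ] lp (fun _ : ℕ => W') 2) (hSW' : IsUnilateralShift SW')
    (Θ' : lp (fun _ : ℕ => W') 2 →ₗᵢ[ℂ] ModelSpace n E)
    (hΘ'r : Set.range Θ' = (S : Set (ModelSpace n E)))
    (hΘ'S : ∀ g, Θ' (SW' g) = Mz (Θ' g))
    (T' : Fin n → (lp (fun _ : ℕ => W') 2 →L[ℂ] lp (fun _ : ℕ => W') 2))
    (hT'shift : ∀ i, IsShiftOp (T' i))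
    (hT'c : ∀ i, T' i ∘L SW' = SW' ∘L T' i)
    (hΘ'T : ∀ (i : Fin n) g, Θ' (T' i g) = Mk i (Θ' g)) :
    ∃ (τ : ↥W ≃ₗᵢ[ℂ] W') (Uτ : lp (fun _ : ℕ => ↥W) 2 ≃ₗᵢ[ℂ] lp (fun _ : ℕ => W') 2),
      (∀ (g : lp (fun _ : ℕ => ↥W) 2) (m : ℕ), (Uτ g) m = τ (g m)) ∧
      (∀ g, Θ g = Θ' (Uτ g)) ∧
      (∀ (i : Fin n) g, Uτ (T i g) = T' i (Uτ g)) := by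
  exact aux_main Mz Mk S hSk SW hSW Θ hΘr hΘS T hT SW' hSW' Θ' hΘ'r hΘ'S T' hΘ'T
end
end

section
/- Let E be a complex Hilbert space and let S ⊆ ℓ²(ℕ, E) be a nonzero closed subspace invariant under the unilateral shift S_E. Let W = S ⊖ S_E S. Then the map Π : ℓ²(ℕ, W) → ℓ²(ℕ, E) determined by Π(e_m ⊗ η) = S_Eᵐ η for m ∈ ℕ and η ∈ W is a well-defined isometry satisfying Π S_W = S_E Π and range Π = S, where S_W is the unilateral shift on ℓ²(ℕ, W). -/
noncomputable section

open Filter Topology MeasureTheory ContinuousLinearMap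
open scoped InnerProductSpace ENNReal NNReal

universe u v

section aux

abbrev HS (E : Type u) [NormedAddCommGroup E] [InnerProductSpace ℂ E] : Type u :=
  lp (fun _ : ℕ => E) 2

variable {E : Type u} [NormedAddCommGroup E] [InnerProductSpace ℂ E] [CompleteSpace E]

variable {SE : HS E →L[ℂ] HS E}

lemma shift_norm (hSE : IsUnilateralShift SE) (f : HS E) : ‖SE f‖ = ‖f‖ := by
  have h2 : (0:ℝ) < (2 : ℝ≥0∞).toReal := by norm_num
  have hs := lp.hasSum_norm h2 (SE f)
  have hs' := lp.hasSum_norm h2 f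
  have heq : (fun n : ℕ => ‖f n‖ ^ (2 : ℝ≥0∞).toReal)
      = fun n : ℕ => ‖(SE f) (n + 1)‖ ^ (2 : ℝ≥0∞).toReal := by
    funext n; rw [(hSE f).2 n]
  rw [heq] at hs'
  have h0 : HasSum (fun n : ℕ => ‖(SE f) n‖ ^ (2 : ℝ≥0∞).toReal)
      (‖f‖ ^ (2 : ℝ≥0∞).toReal + ∑ i ∈ Finset.range 1,
        ‖(SE f) i‖ ^ (2 : ℝ≥0∞).toReal) := (hasSum_nat_add_iff 1).mp hs'
  simp only [Finset.range_one, Finset.sum_singleton, (hSE f).1, norm_zero] at h0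
  have h0' : (0:ℝ) ^ (2 : ℝ≥0∞).toReal = 0 := by
    simpa using Real.zero_rpow h2.ne'
  rw [h0', add_zero] at h0
  have := hs.unique h0
  exact Real.rpow_left_injOn h2.ne' (norm_nonneg _) (norm_nonneg _) this

lemma shift_pow_norm (hSE : IsUnilateralShift SE) (m : ℕ) (f : HS E) :
    ‖(SE ^ m) f‖ = ‖f‖ := by
  induction m generalizing f with
  | zero => simp
  | succ m ih =>
    rw [pow_succ, ContinuousLinearMap.mul_apply, ih, shift_norm hSE]

/-- `SE ^ m` as a linear isometry. -/
def shiftPowIso (hSE : IsUnilateralShift SE) (m : ℕ) : HS E →ₗᵢ[ℂ] HS E :=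
  ⟨(SE ^ m : HS E →L[ℂ] HS E).toLinearMap, shift_pow_norm hSE m⟩

@[simp] lemma shiftPowIso_apply (hSE : IsUnilateralShift SE) (m : ℕ) (f : HS E) :
    shiftPowIso hSE m f = (SE ^ m) f := rfl

lemma shift_pow_apply (hSE : IsUnilateralShift SE) (m : ℕ) (f : HS E) (k : ℕ) :
    ((SE ^ m) f) k = if m ≤ k then f (k - m) else 0 := by
  induction m generalizing k with
  | zero => simp
  | succ m ih =>
    rw [pow_succ', ContinuousLinearMap.mul_apply]
    cases k with
    | zero => simp [(hSE _).1]
    | succ k =>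
      rw [(hSE _).2 k, ih]
      simp [Nat.succ_le_succ_iff, Nat.succ_sub_succ]

lemma shift_inner (hSE : IsUnilateralShift SE) (f g : HS E) :
    ⟪SE f, SE g⟫_ℂ = ⟪f, g⟫_ℂ := by
  have := (shiftPowIso hSE 1).inner_map_map f g
  simpa using this

end aux

section wold

variable {E : Type u} [NormedAddCommGroup E] [InnerProductSpace ℂ E] [CompleteSpace E]
variable {SE : HS E →L[ℂ] HS E}
variable {S W : Submodule ℂ (HS E)}

lemma pow_mem_S (hSV : ∀ f ∈ S, SE f ∈ S) (j : ℕ) {x : HS E} (hx : x ∈ S) :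
    (SE ^ j) x ∈ S := by
  induction j with
  | zero => simpa using hx
  | succ j ih =>
    rw [pow_succ', ContinuousLinearMap.mul_apply]
    exact hSV _ ih

lemma shift_factor (hSE : IsUnilateralShift SE)
    (hScl : IsClosed (S : Set (HS E))) (hSV : ∀ f ∈ S, SE f ∈ S)
    (hW : W = S ⊓ (S.map (SE : HS E →ₗ[ℂ] HS E))ᗮ) {g : HS E} (hg : g ∈ S)
    (horth : ∀ η ∈ W, ⟪η, g⟫_ℂ = 0) : ∃ g₁ ∈ S, SE g₁ = g := by
  set X : Submodule ℂ (HS E) := S.map (SE : HS E →ₗ[ℂ] HS E) with hX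
  have hiso : Isometry ⇑SE := AddMonoidHomClass.isometry_of_norm _ (shift_norm hSE)
  have hXcl : IsClosed (X : Set (HS E)) := by
    rw [hX, Submodule.map_coe]
    exact hiso.isClosedEmbedding.isClosedMap _ hScl
  haveI : CompleteSpace ↥X := hXcl.completeSpace_coe
  obtain ⟨y, hy, z, hz, hgyz⟩ := X.exists_add_mem_mem_orthogonal g
  have hyS : y ∈ S := by
    obtain ⟨x, hx, rfl⟩ := hy
    exact hSV _ hx
  have hzW : z ∈ W := by
    rw [hW]
    exact ⟨by simpa [hgyz] using S.sub_mem hg hyS, hz⟩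
  have h1 : ⟪z, g⟫_ℂ = 0 := horth z hzW
  have h2 : ⟪z, y⟫_ℂ = 0 := inner_eq_zero_symm.mp (hz y hy)
  have h3 : ⟪z, z⟫_ℂ = 0 := by
    rw [hgyz] at h1
    rw [inner_add_right, h2, zero_add] at h1
    exact h1
  have hz0 : z = 0 := inner_self_eq_zero.mp h3
  obtain ⟨x, hx, hxe⟩ := hy
  exact ⟨x, hx, by have hxe : SE x = y := hxe; rw [hxe, hgyz, hz0, add_zero]⟩

lemma wold_factor (hSE : IsUnilateralShift SE)
    (hScl : IsClosed (S : Set (HS E))) (hSV : ∀ f ∈ S, SE f ∈ S)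
    (hW : W = S ⊓ (S.map (SE : HS E →ₗ[ℂ] HS E))ᗮ) (m : ℕ) :
    ∀ g ∈ S, (∀ (k : ℕ), ∀ η ∈ W, ⟪(SE ^ k) η, g⟫_ℂ = 0) →
      ∃ g' ∈ S, (SE ^ m) g' = g := by
  induction m with
  | zero => exact fun g hg _ => ⟨g, hg, by simp⟩
  | succ m ih =>
    intro g hg horth
    obtain ⟨g₁, hg₁, rfl⟩ := shift_factor hSE hScl hSV hW hg
      (fun η hη => by simpa using horth 0 η hη)
    have horth₁ : ∀ (k : ℕ), ∀ η ∈ W, ⟪(SE ^ k) η, g₁⟫_ℂ = 0 := by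
      intro k η hη
      have := shift_inner hSE ((SE ^ k) η) g₁
      rw [← this]
      have hpow : SE ((SE ^ k) η) = (SE ^ (k + 1)) η := by
        rw [pow_succ', ContinuousLinearMap.mul_apply]
      rw [hpow]
      exact horth (k + 1) η hη
    obtain ⟨g', hg', rfl⟩ := ih g₁ hg₁ horth₁
    exact ⟨g', hg', by rw [pow_succ', ContinuousLinearMap.mul_apply]⟩

lemma orth_all_eq_zero (hSE : IsUnilateralShift SE)
    (hScl : IsClosed (S : Set (HS E))) (hSV : ∀ f ∈ S, SE f ∈ S)
    (hW : W = S ⊓ (S.map (SE : HS E →ₗ[ℂ] HS E))ᗮ) {g : HS E} (hg : g ∈ S)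
    (horth : ∀ (k : ℕ), ∀ η ∈ W, ⟪(SE ^ k) η, g⟫_ℂ = 0) : g = 0 := by
  apply lp.ext
  funext j
  obtain ⟨g', _, hge⟩ := wold_factor hSE hScl hSV hW (j + 1) g hg horth
  have := shift_pow_apply hSE (j + 1) g' j
  rw [hge] at this
  simpa [Nat.not_succ_le_self] using this

end wold


set_option maxHeartbeats 1000000 in
/-- (Beurling–Lax–Halmos, ℓ²-model.) If `S ⊆ ℓ²(ℕ, E)` is a nonzero closed
subspace invariant under the unilateral shift `S_E` and `W = S ⊖ S_E S`, then the map determined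
by `Π(e_m ⊗ η) = S_Eᵐ η` is a well-defined isometry `ℓ²(ℕ, W) → ℓ²(ℕ, E)` satisfying
`Π S_W = S_E Π` and `range Π = S`. -/
theorem statement17 (E : Type u) [NormedAddCommGroup E] [InnerProductSpace ℂ E] [CompleteSpace E]
    (SE : lp (fun _ : ℕ => E) 2 →L[ℂ] lp (fun _ : ℕ => E) 2) (hSE : IsUnilateralShift SE)
    (S : Submodule ℂ (lp (fun _ : ℕ => E) 2)) (hSne : S ≠ ⊥)
    (hScl : IsClosed (S : Set (lp (fun _ : ℕ => E) 2)))
    (hSV : ∀ f ∈ S, SE f ∈ S)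
    (W : Submodule ℂ (lp (fun _ : ℕ => E) 2)) (hW : W = S ⊓ (S.map (SE : lp (fun _ : ℕ => E) 2 →ₗ[ℂ] lp (fun _ : ℕ => E) 2))ᗮ)
    (SW : lp (fun _ : ℕ => ↥W) 2 →L[ℂ] lp (fun _ : ℕ => ↥W) 2)
    (hSW : IsUnilateralShift SW) :
    ∃ Θ : lp (fun _ : ℕ => ↥W) 2 →ₗᵢ[ℂ] lp (fun _ : ℕ => E) 2,
      (∀ (m : ℕ) (η : ↥W), Θ (lp.single 2 m η) = (SE ^ m) (η : lp (fun _ : ℕ => E) 2)) ∧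
      (∀ g, Θ (SW g) = SE (Θ g)) ∧
      Set.range Θ = (S : Set (lp (fun _ : ℕ => E) 2)) := by
  classical
  have hWcl : IsClosed (W : Set (lp (fun _ : ℕ => E) 2)) := by
    rw [hW, Submodule.coe_inf]
    exact hScl.inter (Submodule.isClosed_orthogonal _)
  haveI : CompleteSpace ↥W := hWcl.completeSpace_coe
  have hWS : W ≤ S := hW ▸ inf_le_left
  set V : ∀ _ : ℕ, ↥W →ₗᵢ[ℂ] lp (fun _ : ℕ => E) 2 :=
    fun m => (shiftPowIso hSE m).comp W.subtypeₗᵢ with hVdef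
  have horthlt : ∀ m k : ℕ, m < k → ∀ η ξ : ↥W,
      ⟪(SE ^ m) (η : lp (fun _ : ℕ => E) 2), (SE ^ k) (ξ : lp (fun _ : ℕ => E) 2)⟫_ℂ = 0 := by
    intro m k hmk η ξ
    obtain ⟨d, rfl⟩ : ∃ d, k = m + (d + 1) := ⟨k - m - 1, by omega⟩
    have h1 : (SE ^ (m + (d + 1))) (ξ : lp (fun _ : ℕ => E) 2)
        = (SE ^ m) ((SE ^ (d + 1)) (ξ : lp (fun _ : ℕ => E) 2)) := by
      rw [pow_add, ContinuousLinearMap.mul_apply]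
    rw [h1]
    have h2 := (shiftPowIso hSE m).inner_map_map
      (η : lp (fun _ : ℕ => E) 2) ((SE ^ (d + 1)) (ξ : lp (fun _ : ℕ => E) 2))
    simp only [shiftPowIso_apply] at h2
    rw [h2]
    have hWorth : W ≤ (S.map (SE : HS E →ₗ[ℂ] HS E))ᗮ := hW ▸ inf_le_right
    have hη : (η : lp (fun _ : ℕ => E) 2) ∈ (S.map (SE : HS E →ₗ[ℂ] HS E))ᗮ := hWorth η.2
    have hmem : (SE ^ (d + 1)) (ξ : lp (fun _ : ℕ => E) 2) ∈ S.map (SE : HS E →ₗ[ℂ] HS E) := by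
      rw [pow_succ', ContinuousLinearMap.mul_apply]
      exact ⟨(SE ^ d) (ξ : lp (fun _ : ℕ => E) 2), pow_mem_S hSV d (hWS ξ.2), rfl⟩
    exact inner_eq_zero_symm.mp (((Submodule.mem_orthogonal _ _).mp hη) _ hmem)
  have hV : OrthogonalFamily ℂ (fun _ : ℕ => ↥W) V := by
    intro m k hmk η ξ
    rcases lt_or_gt_of_ne hmk with h | h
    · exact horthlt m k h η ξ
    · exact inner_eq_zero_symm.mp (horthlt k m h ξ η)
  have prop1 : ∀ (m : ℕ) (η : ↥W),
      hV.linearIsometry (lp.single 2 m η) = (SE ^ m) (η : lp (fun _ : ℕ => E) 2) := by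
    intro m η
    exact hV.linearIsometry_apply_single η
  have hSWsingle : ∀ (m : ℕ) (η : ↥W), SW (lp.single 2 m η) = lp.single 2 (m + 1) η := by
    intro m η
    apply lp.ext
    funext k
    cases k with
    | zero =>
      rw [(hSW _).1, lp.single_apply_ne _ _ _ (show (0:ℕ) ≠ m + 1 by omega)]
    | succ k =>
      rw [(hSW _).2 k]
      by_cases h : k = m
      · subst h; rw [lp.single_apply_self, lp.single_apply_self]
      · rw [lp.single_apply_ne _ _ _ h, lp.single_apply_ne _ _ _ (show k + 1 ≠ m + 1 by omega)]
  have prop2 : ∀ g, hV.linearIsometry (SW g) = SE (hV.linearIsometry g) := by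
    intro g
    have h1 : HasSum (fun m : ℕ => lp.single 2 m (g m)) g :=
      lp.hasSum_single ENNReal.ofNat_ne_top g
    have hA : HasSum
        (fun m : ℕ => hV.linearIsometry.toContinuousLinearMap (SW (lp.single 2 m (g m))))
        (hV.linearIsometry.toContinuousLinearMap (SW g)) :=
      (h1.mapL SW).mapL hV.linearIsometry.toContinuousLinearMap
    have hB : HasSum
        (fun m : ℕ => SE (hV.linearIsometry.toContinuousLinearMap (lp.single 2 m (g m))))
        (SE (hV.linearIsometry.toContinuousLinearMap g)) :=
      (h1.mapL hV.linearIsometry.toContinuousLinearMap).mapL SE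
    simp only [LinearIsometry.coe_toContinuousLinearMap] at hA hB
    have hterm : (fun m : ℕ => hV.linearIsometry (SW (lp.single 2 m (g m))))
        = fun m : ℕ => SE (hV.linearIsometry (lp.single 2 m (g m))) := by
      funext m
      rw [hSWsingle, prop1, prop1, pow_succ', ContinuousLinearMap.mul_apply]
    rw [hterm] at hA
    exact hA.unique hB
  have subS : (⨆ m : ℕ, LinearMap.range (V m).toLinearMap) ≤ S := by
    refine iSup_le fun m => ?_
    rintro x ⟨η, rfl⟩
    exact pow_mem_S hSV m (hWS η.2)
  have hRS : LinearMap.range hV.linearIsometry.toLinearMap ≤ S :=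
    hV.range_linearIsometry.le.trans (Submodule.topologicalClosure_minimal _ subS hScl)
  have hRcl : IsClosed ((LinearMap.range hV.linearIsometry.toLinearMap :
      Submodule ℂ (lp (fun _ : ℕ => E) 2)) : Set (lp (fun _ : ℕ => E) 2)) := by
    rw [hV.range_linearIsometry]
    exact Submodule.isClosed_topologicalClosure _
  haveI : CompleteSpace ↥(LinearMap.range hV.linearIsometry.toLinearMap) :=
    hRcl.completeSpace_coe
  have hSR : ∀ g ∈ S, g ∈ LinearMap.range hV.linearIsometry.toLinearMap := by
    intro g hg
    obtain ⟨y, hy, z, hz, hgyz⟩ :=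
      (LinearMap.range hV.linearIsometry.toLinearMap).exists_add_mem_mem_orthogonal g
    have hzS : z ∈ S := by
      have hze : z = g - y := by rw [hgyz]; abel
      rw [hze]
      exact S.sub_mem hg (hRS hy)
    have horth : ∀ (k : ℕ), ∀ η ∈ W, ⟪(SE ^ k) η, z⟫_ℂ = 0 := by
      intro k η hη
      exact hz _ ⟨lp.single 2 k (⟨η, hη⟩ : ↥W), prop1 k ⟨η, hη⟩⟩
    have hz0 : z = 0 := orth_all_eq_zero hSE hScl hSV hW hzS horth
    rw [hgyz, hz0, add_zero]
    exact hy
  refine ⟨hV.linearIsometry, prop1, prop2, ?_⟩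
  have hcoe : Set.range ⇑hV.linearIsometry
      = ((LinearMap.range hV.linearIsometry.toLinearMap :
          Submodule ℂ (lp (fun _ : ℕ => E) 2)) : Set (lp (fun _ : ℕ => E) 2)) := by
    rw [LinearMap.coe_range, LinearIsometry.coe_toLinearMap]
  rw [hcoe]
  apply Set.eq_of_subset_of_subset
  · exact fun x hx => hRS hx
  · exact fun x hx => hSR x hx
end
end
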